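/- arXiv:1605.05468 — 2 statements merged into one kernel-verified Lean document; each statement's English description precedes it below -/
import Mathlib

section
/- Let p > 1 be a real number. There exists C > 0 depending only on p such that for all a ≥ 0 and b₁, b₂ with a + b₁ ≥ 0 and a + b₂ ≥ 0: |(a+b₁)^p - (a+b₂)^p - p·a^{p-1}·(b₁-b₂)| ≤ C·(|b₁|^{p-1} + |b₂|^{p-1})·|b₁-b₂| when p ≤ 2, and ≤ C·(a^{p-2}(|b₁|+|b₂|) + |b₁|^{p-1} + |b₂|^{p-1})·|b₁-b₂| when p > 2. -/
open Real

/-- Real version of subadditivity of `rpow` for exponents in `[0,1]`. -/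
lemma aux_rpow_add_le (x y q : ℝ) (hx : 0 ≤ x) (hy : 0 ≤ y) (hq0 : 0 ≤ q) (hq1 : q ≤ 1) :
    (x + y) ^ q ≤ x ^ q + y ^ q := by
  have h := NNReal.rpow_add_le_add_rpow x.toNNReal y.toNNReal hq0 hq1
  have h' := NNReal.coe_le_coe.2 h
  push_cast at h'
  rwa [Real.coe_toNNReal x hx, Real.coe_toNNReal y hy] at h'

/-- Hölder-type estimate `|v^q - u^q| ≤ |v - u|^q` for `q ∈ [0,1]`. -/
lemma aux_abs_rpow_sub (u v q : ℝ) (hu : 0 ≤ u) (hv : 0 ≤ v) (hq0 : 0 ≤ q) (hq1 : q ≤ 1) :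
    |v ^ q - u ^ q| ≤ |v - u| ^ q := by
  wlog h : u ≤ v generalizing u v
  · rw [abs_sub_comm, abs_sub_comm v u]; exact this v u hv hu (le_of_not_ge h)
  have h1 : v ^ q ≤ (v - u) ^ q + u ^ q := by
    have := aux_rpow_add_le (v - u) u q (by linarith) hu hq0 hq1
    rwa [sub_add_cancel] at this
  have h2 : u ^ q ≤ v ^ q := Real.rpow_le_rpow hu h hq0
  rw [abs_of_nonneg (by linarith), abs_of_nonneg (by linarith)]
  linarith

/-- FTC identity for `rpow` with exponent `≥ 1`. -/
lemma aux_integral_identity (q a x y : ℝ) (hq : 1 ≤ q) :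
    (a + x) ^ q - (a + y) ^ q = ∫ t in y..x, q * (a + t) ^ (q - 1) := by
  have hderiv : ∀ t ∈ Set.uIcc y x,
      HasDerivAt (fun s => (a + s) ^ q) (q * (a + t) ^ (q - 1)) t := by
    intro t _
    have h1 : HasDerivAt (fun s : ℝ => a + s) 1 t := (hasDerivAt_id t).const_add a
    have h2 : HasDerivAt (fun u : ℝ => u ^ q) (q * (a + t) ^ (q - 1)) (a + t) :=
      Real.hasDerivAt_rpow_const (Or.inr hq)
    simpa [Function.comp_def] using h2.comp t h1
  have hcont : Continuous (fun t : ℝ => q * (a + t) ^ (q - 1)) := by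
    have : Continuous (fun t : ℝ => (a + t) ^ (q - 1)) :=
      (Real.continuous_rpow_const (by linarith)).comp (continuous_const.add continuous_id)
    exact continuous_const.mul this
  rw [intervalIntegral.integral_eq_sub_of_hasDerivAt hderiv (hcont.intervalIntegrable y x)]

/-- Mean-value type estimate via the integral representation. -/
lemma aux_main_est (q a c x y M : ℝ) (hq : 1 ≤ q)
    (hM : ∀ t ∈ Set.uIoc y x, |q * (a + t) ^ (q - 1) - c| ≤ M) :
    |(a + x) ^ q - (a + y) ^ q - c * (x - y)| ≤ M * |x - y| := by
  have hcont : Continuous (fun t : ℝ => q * (a + t) ^ (q - 1)) := by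
    have : Continuous (fun t : ℝ => (a + t) ^ (q - 1)) :=
      (Real.continuous_rpow_const (by linarith)).comp (continuous_const.add continuous_id)
    exact continuous_const.mul this
  have hrepr : (a + x) ^ q - (a + y) ^ q - c * (x - y)
      = ∫ t in y..x, (q * (a + t) ^ (q - 1) - c) := by
    rw [intervalIntegral.integral_sub (hcont.intervalIntegrable y x) intervalIntegrable_const,
      ← aux_integral_identity q a x y hq, intervalIntegral.integral_const, smul_eq_mul]
    ring
  rw [hrepr]
  have := intervalIntegral.norm_integral_le_of_norm_le_const
    (f := fun t => q * (a + t) ^ (q - 1) - c) (C := M) (a := y) (b := x)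
    (by intro t ht; simpa [Real.norm_eq_abs] using hM t ht)
  simpa [Real.norm_eq_abs] using this

/-- Lipschitz estimate for `rpow` with exponent `≥ 1`. -/
lemma aux_lipschitz (q a t : ℝ) (hq : 1 ≤ q) (ha : 0 ≤ a) (hat : 0 ≤ a + t) :
    |(a + t) ^ q - a ^ q| ≤ q * (a + |t|) ^ (q - 1) * |t| := by
  have h := aux_main_est q a 0 t 0 (q * (a + |t|) ^ (q - 1)) hq ?_
  · simpa using h
  · intro s hs
    have hq1 : (0:ℝ) ≤ q - 1 := by linarith
    have hqpos : (0:ℝ) < q := by linarith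
    have habs : 0 ≤ |t| := abs_nonneg t
    rcases Set.mem_uIoc.1 hs with ⟨h1, h2⟩ | ⟨h1, h2⟩
    · have h0 : 0 ≤ a + s := by linarith
      have hle : a + s ≤ a + |t| := by have := le_abs_self t; linarith
      rw [sub_zero, abs_of_nonneg (by positivity)]
      exact mul_le_mul_of_nonneg_left (Real.rpow_le_rpow h0 hle hq1) hqpos.le
    · have h0 : 0 ≤ a + s := by linarith
      have hle : a + s ≤ a + |t| := by linarith
      rw [sub_zero, abs_of_nonneg (by positivity)]
      exact mul_le_mul_of_nonneg_left (Real.rpow_le_rpow h0 hle hq1) hqpos.le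

lemma aux_rpow_mul_self (x q : ℝ) (hx : 0 ≤ x) (hq : 0 < q) : x ^ q * x = x ^ (q + 1) := by
  rcases eq_or_lt_of_le hx with h | h
  · rw [← h, Real.zero_rpow hq.ne', Real.zero_rpow (by linarith), zero_mul]
  · rw [Real.rpow_add h, Real.rpow_one]

/-- `(x+y)^q ≤ 2^q (x^q + y^q)` for nonneg `x,y` and `0 ≤ q`. -/
lemma aux_add_rpow_le (x y q : ℝ) (hx : 0 ≤ x) (hy : 0 ≤ y) (hq : 0 ≤ q) :
    (x + y) ^ q ≤ 2 ^ q * (x ^ q + y ^ q) := by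
  rcases le_total x y with h | h
  · calc (x + y) ^ q ≤ (2 * y) ^ q := Real.rpow_le_rpow (by linarith) (by linarith) hq
    _ = 2 ^ q * y ^ q := Real.mul_rpow (by norm_num) hy
    _ ≤ 2 ^ q * (x ^ q + y ^ q) := by
        have : (0:ℝ) ≤ x ^ q := Real.rpow_nonneg hx q
        have h2 : (0:ℝ) ≤ (2:ℝ) ^ q := Real.rpow_nonneg (by norm_num) q
        nlinarith
  · calc (x + y) ^ q ≤ (2 * x) ^ q := Real.rpow_le_rpow (by linarith) (by linarith) hq
    _ = 2 ^ q * x ^ q := Real.mul_rpow (by norm_num) hx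
    _ ≤ 2 ^ q * (x ^ q + y ^ q) := by
        have : (0:ℝ) ≤ y ^ q := Real.rpow_nonneg hy q
        have h2 : (0:ℝ) ≤ (2:ℝ) ^ q := Real.rpow_nonneg (by norm_num) q
        nlinarith

/-- Elementary Lipschitz-type estimate for powers `p > 1`:
`|(a+b₁)^p - (a+b₂)^p - p·a^{p-1}·(b₁-b₂)|` is controlled, with a bound depending on
whether `p ≤ 2` or `p > 2`. -/
theorem stmt_9 (p : ℝ) (hp : 1 < p) :
    ∃ C : ℝ, 0 < C ∧ ∀ a b₁ b₂ : ℝ, 0 ≤ a → 0 ≤ a + b₁ → 0 ≤ a + b₂ →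
      ((p ≤ 2 →
        |(a + b₁) ^ p - (a + b₂) ^ p - p * a ^ (p - 1) * (b₁ - b₂)| ≤
          C * (|b₁| ^ (p - 1) + |b₂| ^ (p - 1)) * |b₁ - b₂|) ∧
       (2 < p →
        |(a + b₁) ^ p - (a + b₂) ^ p - p * a ^ (p - 1) * (b₁ - b₂)| ≤
          C * (a ^ (p - 2) * (|b₁| + |b₂|) + |b₁| ^ (p - 1) + |b₂| ^ (p - 1)) *
            |b₁ - b₂|)) := by
  have hppos : (0:ℝ) < p := by linarith
  have hD : (0:ℝ) < 2 ^ (p - 2) := Real.rpow_pos_of_pos (by norm_num) _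
  have hE : (0:ℝ) < 2 ^ (p - 1) := Real.rpow_pos_of_pos (by norm_num) _
  have hKnn : (0:ℝ) ≤ p * (p - 1) * 2 ^ (p - 2) * (1 + 2 ^ (p - 1)) :=
    mul_nonneg (mul_nonneg (mul_nonneg hppos.le (by linarith)) hD.le) (by linarith)
  refine ⟨p + p * (p - 1) * 2 ^ (p - 2) * (1 + 2 ^ (p - 1)), by nlinarith, ?_⟩
  intro a b₁ b₂ ha hab₁ hab₂
  have hB₁ : (0:ℝ) ≤ |b₁| ^ (p - 1) := Real.rpow_nonneg (abs_nonneg _) _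
  have hB₂ : (0:ℝ) ≤ |b₂| ^ (p - 1) := Real.rpow_nonneg (abs_nonneg _) _
  have habs_t : ∀ t ∈ Set.uIoc b₂ b₁, 0 ≤ a + t ∧ |t| ≤ |b₁| + |b₂| := by
    intro t ht
    rcases Set.mem_uIoc.1 ht with ⟨h1, h2⟩ | ⟨h1, h2⟩
    · refine ⟨by linarith, abs_le.2 ⟨?_, ?_⟩⟩
      · have := neg_abs_le b₂; have := abs_nonneg b₁; linarith
      · have := le_abs_self b₁; have := abs_nonneg b₂; linarith
    · refine ⟨by linarith, abs_le.2 ⟨?_, ?_⟩⟩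
      · have := neg_abs_le b₁; have := abs_nonneg b₂; linarith
      · have := le_abs_self b₂; have := abs_nonneg b₁; linarith
  have habs_t' : ∀ t ∈ Set.uIoc b₂ b₁, |t| ≤ max |b₁| |b₂| := by
    intro t ht
    rcases Set.mem_uIoc.1 ht with ⟨h1, h2⟩ | ⟨h1, h2⟩
    · refine abs_le.2 ⟨?_, ?_⟩
      · have := neg_abs_le b₂; have := le_max_right |b₁| |b₂|; linarith
      · have := le_abs_self b₁; have := le_max_left |b₁| |b₂|; linarith
    · refine abs_le.2 ⟨?_, ?_⟩
      · have := neg_abs_le b₁; have := le_max_left |b₁| |b₂|; linarith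
      · have := le_abs_self b₂; have := le_max_right |b₁| |b₂|; linarith
  constructor
  · -- case p ≤ 2
    intro hp2
    refine aux_main_est p a (p * a ^ (p - 1)) b₁ b₂ _ hp.le ?_
    intro t ht
    obtain ⟨h0, _⟩ := habs_t t ht
    have hmax := habs_t' t ht
    have h1 : |p * (a + t) ^ (p - 1) - p * a ^ (p - 1)|
        = p * |(a + t) ^ (p - 1) - a ^ (p - 1)| := by
      rw [← mul_sub, abs_mul, abs_of_pos hppos]
    rw [h1]
    have h2 : |(a + t) ^ (p - 1) - a ^ (p - 1)| ≤ |t| ^ (p - 1) := by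
      have := aux_abs_rpow_sub a (a + t) (p - 1) ha h0 (by linarith) (by linarith)
      simpa using this
    have h3 : |t| ^ (p - 1) ≤ |b₁| ^ (p - 1) + |b₂| ^ (p - 1) := by
      rcases le_total |b₁| |b₂| with h | h
      · have : |t| ^ (p - 1) ≤ |b₂| ^ (p - 1) :=
          Real.rpow_le_rpow (abs_nonneg _) (by rw [max_eq_right h] at hmax; exact hmax)
            (by linarith)
        linarith
      · have : |t| ^ (p - 1) ≤ |b₁| ^ (p - 1) :=
          Real.rpow_le_rpow (abs_nonneg _) (by rw [max_eq_left h] at hmax; exact hmax)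
            (by linarith)
        linarith
    have h4 : p * |(a + t) ^ (p - 1) - a ^ (p - 1)| ≤ p * (|b₁| ^ (p - 1) + |b₂| ^ (p - 1)) :=
      mul_le_mul_of_nonneg_left (le_trans h2 h3) hppos.le
    have h5 : (0:ℝ) ≤ (p * (p - 1) * 2 ^ (p - 2) * (1 + 2 ^ (p - 1)))
        * (|b₁| ^ (p - 1) + |b₂| ^ (p - 1)) := mul_nonneg hKnn (by linarith)
    nlinarith
  · -- case 2 < p
    intro hp2
    refine aux_main_est p a (p * a ^ (p - 1)) b₁ b₂ _ hp.le ?_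
    intro t ht
    obtain ⟨h0, hts⟩ := habs_t t ht
    have hsnn : (0:ℝ) ≤ |b₁| + |b₂| := by positivity
    have hann : (0:ℝ) ≤ a ^ (p - 2) := Real.rpow_nonneg ha _
    have h1 : |p * (a + t) ^ (p - 1) - p * a ^ (p - 1)|
        = p * |(a + t) ^ (p - 1) - a ^ (p - 1)| := by
      rw [← mul_sub, abs_mul, abs_of_pos hppos]
    rw [h1]
    have h2 : |(a + t) ^ (p - 1) - a ^ (p - 1)| ≤ (p - 1) * (a + |t|) ^ (p - 2) * |t| := by
      have := aux_lipschitz (p - 1) a t (by linarith) ha h0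
      simpa [show p - 1 - 1 = p - 2 by ring] using this
    have h4 : (a + |t|) ^ (p - 2)
        ≤ 2 ^ (p - 2) * (a ^ (p - 2) + (|b₁| + |b₂|) ^ (p - 2)) := by
      calc (a + |t|) ^ (p - 2) ≤ (a + (|b₁| + |b₂|)) ^ (p - 2) :=
            Real.rpow_le_rpow (by positivity) (by linarith) (by linarith)
        _ ≤ 2 ^ (p - 2) * (a ^ (p - 2) + (|b₁| + |b₂|) ^ (p - 2)) :=
            aux_add_rpow_le a (|b₁| + |b₂|) _ ha hsnn (by linarith)
    have h5 : (|b₁| + |b₂|) ^ (p - 1) ≤ 2 ^ (p - 1) * (|b₁| ^ (p - 1) + |b₂| ^ (p - 1)) :=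
      aux_add_rpow_le |b₁| |b₂| _ (abs_nonneg _) (abs_nonneg _) (by linarith)
    have hss : (|b₁| + |b₂|) ^ (p - 2) * (|b₁| + |b₂|) = (|b₁| + |b₂|) ^ (p - 1) := by
      rw [aux_rpow_mul_self _ _ hsnn (by linarith), show p - 2 + 1 = p - 1 by ring]
    -- step: bound by the intermediate quantity
    have h6 : (p - 1) * (a + |t|) ^ (p - 2) * |t|
        ≤ (p - 1) * 2 ^ (p - 2)
          * (a ^ (p - 2) * (|b₁| + |b₂|) + (|b₁| + |b₂|) ^ (p - 1)) := by
      have hnn1 : (0:ℝ) ≤ (a + |t|) ^ (p - 2) := Real.rpow_nonneg (by positivity) _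
      have hnn2 : (0:ℝ) ≤ (|b₁| + |b₂|) ^ (p - 2) := Real.rpow_nonneg hsnn _
      have habst : (0:ℝ) ≤ |t| := abs_nonneg t
      have step := mul_le_mul h4 hts habst (by positivity)
      calc (p - 1) * (a + |t|) ^ (p - 2) * |t|
          ≤ (p - 1) * (2 ^ (p - 2) * (a ^ (p - 2) + (|b₁| + |b₂|) ^ (p - 2)) * (|b₁| + |b₂|)) :=
            by nlinarith
        _ = (p - 1) * 2 ^ (p - 2)
            * (a ^ (p - 2) * (|b₁| + |b₂|) + (|b₁| + |b₂|) ^ (p - 2) * (|b₁| + |b₂|)) := by ring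
        _ = (p - 1) * 2 ^ (p - 2)
            * (a ^ (p - 2) * (|b₁| + |b₂|) + (|b₁| + |b₂|) ^ (p - 1)) := by rw [hss]
    have h8 : a ^ (p - 2) * (|b₁| + |b₂|) + (|b₁| + |b₂|) ^ (p - 1)
        ≤ (1 + 2 ^ (p - 1))
          * (a ^ (p - 2) * (|b₁| + |b₂|) + |b₁| ^ (p - 1) + |b₂| ^ (p - 1)) := by
      nlinarith [mul_nonneg (mul_nonneg hE.le hann) hsnn]
    have hBrnn : (0:ℝ) ≤ a ^ (p - 2) * (|b₁| + |b₂|) + |b₁| ^ (p - 1) + |b₂| ^ (p - 1) := by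
      nlinarith
    have h9 : |(a + t) ^ (p - 1) - a ^ (p - 1)|
        ≤ (p - 1) * 2 ^ (p - 2) * ((1 + 2 ^ (p - 1))
          * (a ^ (p - 2) * (|b₁| + |b₂|) + |b₁| ^ (p - 1) + |b₂| ^ (p - 1))) := by
      have hq2 : (0:ℝ) ≤ (p - 1) * 2 ^ (p - 2) := by nlinarith
      calc |(a + t) ^ (p - 1) - a ^ (p - 1)| ≤ (p - 1) * (a + |t|) ^ (p - 2) * |t| := h2
        _ ≤ (p - 1) * 2 ^ (p - 2)
            * (a ^ (p - 2) * (|b₁| + |b₂|) + (|b₁| + |b₂|) ^ (p - 1)) := h6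
        _ ≤ (p - 1) * 2 ^ (p - 2) * ((1 + 2 ^ (p - 1))
            * (a ^ (p - 2) * (|b₁| + |b₂|) + |b₁| ^ (p - 1) + |b₂| ^ (p - 1))) :=
            mul_le_mul_of_nonneg_left h8 hq2
    have h10 := mul_le_mul_of_nonneg_left h9 hppos.le
    have heq : (p + p * (p - 1) * 2 ^ (p - 2) * (1 + 2 ^ (p - 1)))
        * (a ^ (p - 2) * (|b₁| + |b₂|) + |b₁| ^ (p - 1) + |b₂| ^ (p - 1))
        = p * ((p - 1) * 2 ^ (p - 2) * ((1 + 2 ^ (p - 1))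
          * (a ^ (p - 2) * (|b₁| + |b₂|) + |b₁| ^ (p - 1) + |b₂| ^ (p - 1))))
          + p * (a ^ (p - 2) * (|b₁| + |b₂|) + |b₁| ^ (p - 1) + |b₂| ^ (p - 1)) := by ring
    linarith [h10, mul_nonneg hppos.le hBrnn]
end

section
/- Let n ≥ 3 and let G : ℝⁿ × ℝⁿ → ℝ be a kernel with 0 ≤ G(x,y) ≤ C₀·|x-y|^{2-n}. Let δ > 0, W(y) = δ^{(n-2)/2}·(δ² + |y|²)^{1-n/2}, and θ(x) = δ + |x|. Then there exists C = C(n, C₀) > 0 such that for all x₀ with |x₀| ≥ √δ and 0 < δ ≤ 1: ∫_{{|y| ≤ √δ}} G(x₀, y)·W(y)^{(n+2)/(n-2)} dy ≤ C·W(x₀) and ∫_{{|y| ≤ √δ}} G(x₀, y)·W(y) dy ≤ C·δ^{(n-2)/2}·θ(x₀)^{4-n} for n ≥ 5. -/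
open MeasureTheory Real Filter

section helpers

open Metric ENNReal

noncomputable section

variable {n : ℕ}

lemma ofReal_half : ENNReal.ofReal (2⁻¹ : ℝ) = 2⁻¹ := by
  rw [ENNReal.ofReal_inv_of_pos two_pos, ENNReal.ofReal_ofNat]

lemma tsum_half_pow : (∑' k : ℕ, (2⁻¹ : ℝ≥0∞) ^ k) = 2 := by
  rw [ENNReal.tsum_geometric, ENNReal.one_sub_inv_two, inv_inv]

lemma dyadic_le {α : Type*} [MeasurableSpace α] {μ : Measure α}
    {S : Set α} {A : ℕ → Set α} (hS : S ⊆ ⋃ k, A k)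
    {f : α → ℝ≥0∞} {c : ℕ → ℝ≥0∞} (hfc : ∀ k, ∀ y ∈ A k, f y ≤ c k)
    {D : ℝ≥0∞} (hcm : ∀ k, c k * μ (A k) ≤ D * 2⁻¹ ^ k) :
    ∫⁻ y in S, f y ∂μ ≤ D * 2 := by
  calc ∫⁻ y in S, f y ∂μ ≤ ∫⁻ y in ⋃ k, A k, f y ∂μ := lintegral_mono_set hS
  _ ≤ ∑' k, ∫⁻ y in A k, f y ∂μ := lintegral_iUnion_le _ _
  _ ≤ ∑' k, (c k * μ (A k)) := ENNReal.tsum_le_tsum (fun k => by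
        calc ∫⁻ y in A k, f y ∂μ ≤ ∫⁻ _ in A k, c k ∂μ :=
          setLIntegral_mono measurable_const (hfc k)
        _ = c k * μ (A k) := setLIntegral_const _ _)
  _ ≤ ∑' k, D * 2⁻¹ ^ k := ENNReal.tsum_le_tsum hcm
  _ = D * ∑' k, 2⁻¹ ^ k := ENNReal.tsum_mul_left
  _ = D * 2 := by rw [tsum_half_pow]

lemma key_in (N : ℝ) (k : ℕ) {r : ℝ} (hr : 0 < r) :
    (r * 2 ^ (-(k:ℝ) - 1)) ^ (2 - N) * (r * 2 ^ (-(k:ℝ))) ^ N ≤ 2 ^ N * r ^ 2 * 2⁻¹ ^ k := by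
  have h2 : (0:ℝ) ≤ 2 := by norm_num
  have e1 : (r * 2 ^ (-(k:ℝ) - 1)) ^ (2 - N) * (r * 2 ^ (-(k:ℝ))) ^ N
      = r ^ (2:ℝ) * 2 ^ ((-(k:ℝ) - 1) * (2 - N) + (-(k:ℝ)) * N) := by
    rw [Real.mul_rpow hr.le (Real.rpow_nonneg h2 _), Real.mul_rpow hr.le (Real.rpow_nonneg h2 _),
      ← Real.rpow_mul h2, ← Real.rpow_mul h2, Real.rpow_add two_pos,
      show r ^ (2:ℝ) = r ^ (2 - N) * r ^ N by rw [← Real.rpow_add hr]; ring_nf]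
    ring
  have e2 : (2:ℝ) ^ ((-(k:ℝ) - 1) * (2 - N) + (-(k:ℝ)) * N) ≤ 2 ^ (N - (k:ℝ)) := by
    apply Real.rpow_le_rpow_of_exponent_le one_le_two
    have : (0:ℝ) ≤ (k:ℝ) := Nat.cast_nonneg k
    nlinarith
  have e3 : (2:ℝ) ^ (N - (k:ℝ)) = 2 ^ N * 2⁻¹ ^ k := by
    rw [Real.rpow_sub two_pos, Real.rpow_natCast, inv_pow, div_eq_mul_inv]
  calc (r * 2 ^ (-(k:ℝ) - 1)) ^ (2 - N) * (r * 2 ^ (-(k:ℝ))) ^ N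
      = r ^ (2:ℝ) * 2 ^ ((-(k:ℝ) - 1) * (2 - N) + (-(k:ℝ)) * N) := e1
    _ ≤ r ^ (2:ℝ) * (2 ^ N * 2⁻¹ ^ k) := by
        apply mul_le_mul_of_nonneg_left (e2.trans_eq e3) (Real.rpow_nonneg hr.le _)
    _ = 2 ^ N * r ^ 2 * 2⁻¹ ^ k := by rw [Real.rpow_two]; ring

lemma key_out (N : ℝ) (k : ℕ) {a : ℝ} (ha : 0 < a) :
    (a * 2 ^ (k:ℝ)) ^ (-(N + 2)) * (a * 2 ^ ((k:ℝ) + 1)) ^ N ≤ 2 ^ N * a ^ (-(2:ℝ)) * 2⁻¹ ^ k := by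
  have h2 : (0:ℝ) ≤ 2 := by norm_num
  have e1 : (a * 2 ^ (k:ℝ)) ^ (-(N + 2)) * (a * 2 ^ ((k:ℝ) + 1)) ^ N
      = a ^ (-(2:ℝ)) * 2 ^ ((k:ℝ) * (-(N + 2)) + ((k:ℝ) + 1) * N) := by
    rw [Real.mul_rpow ha.le (Real.rpow_nonneg h2 _), Real.mul_rpow ha.le (Real.rpow_nonneg h2 _),
      ← Real.rpow_mul h2, ← Real.rpow_mul h2, Real.rpow_add two_pos,
      show a ^ (-(2:ℝ)) = a ^ (-(N + 2)) * a ^ N by rw [← Real.rpow_add ha]; ring_nf]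
    ring
  have e2 : (2:ℝ) ^ ((k:ℝ) * (-(N + 2)) + ((k:ℝ) + 1) * N) ≤ 2 ^ (N - (k:ℝ)) := by
    apply Real.rpow_le_rpow_of_exponent_le one_le_two
    have : (0:ℝ) ≤ (k:ℝ) := Nat.cast_nonneg k
    nlinarith
  have e3 : (2:ℝ) ^ (N - (k:ℝ)) = 2 ^ N * 2⁻¹ ^ k := by
    rw [Real.rpow_sub two_pos, Real.rpow_natCast, inv_pow, div_eq_mul_inv]
  calc (a * 2 ^ (k:ℝ)) ^ (-(N + 2)) * (a * 2 ^ ((k:ℝ) + 1)) ^ N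
      = a ^ (-(2:ℝ)) * 2 ^ ((k:ℝ) * (-(N + 2)) + ((k:ℝ) + 1) * N) := e1
    _ ≤ a ^ (-(2:ℝ)) * (2 ^ N * 2⁻¹ ^ k) := by
        apply mul_le_mul_of_nonneg_left (e2.trans_eq e3) (Real.rpow_nonneg ha.le _)
    _ = 2 ^ N * a ^ (-(2:ℝ)) * 2⁻¹ ^ k := by ring

lemma lin (hn : 3 ≤ n) (z : EuclideanSpace ℝ (Fin n)) {r : ℝ} (hr : 0 < r) :
    ∫⁻ y in ball z r, ENNReal.ofReal (‖z - y‖ ^ (2 - (n:ℝ))) ≤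
      ENNReal.ofReal ((volume (ball (0 : EuclideanSpace ℝ (Fin n)) 1)).toReal
        * 2 ^ (n:ℝ) * r ^ 2) * 2 := by
  have hne : Nonempty (Fin n) := ⟨⟨0, by omega⟩⟩
  have hnn : Nontrivial (EuclideanSpace ℝ (Fin n)) := inferInstance
  set V : ℝ≥0∞ := volume (ball (0 : EuclideanSpace ℝ (Fin n)) 1) with hV
  have hVtop : V ≠ ⊤ := measure_ball_lt_top.ne
  set A : ℕ → Set (EuclideanSpace ℝ (Fin n)) := fun k =>
    {y | r * 2 ^ (-(k:ℝ) - 1) < ‖z - y‖ ∧ ‖z - y‖ ≤ r * 2 ^ (-(k:ℝ))} with hA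
  have hpos : ∀ k : ℕ, (0:ℝ) < r * 2 ^ (-(k:ℝ) - 1) :=
    fun k => mul_pos hr (Real.rpow_pos_of_pos two_pos _)
  have hcover : ball z r ⊆ {z} ∪ ⋃ k, A k := by
    intro y hy
    by_cases hyz : y = z
    · exact Or.inl hyz
    · right
      have ht : 0 < ‖z - y‖ := by
        rw [norm_pos_iff, sub_ne_zero]; exact fun h => hyz h.symm
      have hExists : ∃ k : ℕ, r * 2 ^ (-(k:ℝ) - 1) < ‖z - y‖ := by
        obtain ⟨m, hm⟩ := exists_pow_lt_of_lt_one (div_pos ht hr) (by norm_num : (2:ℝ)⁻¹ < 1)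
        refine ⟨m, ?_⟩
        have h1 : (2:ℝ) ^ (-(m:ℝ) - 1) ≤ (2:ℝ)⁻¹ ^ m := by
          rw [inv_pow, ← Real.rpow_natCast 2 m, ← Real.rpow_neg (by norm_num)]
          exact Real.rpow_le_rpow_of_exponent_le one_le_two (by linarith)
        calc r * 2 ^ (-(m:ℝ) - 1) ≤ r * (2⁻¹ : ℝ) ^ m := by
              exact mul_le_mul_of_nonneg_left h1 hr.le
          _ < r * (‖z - y‖ / r) := by exact mul_lt_mul_of_pos_left hm hr
          _ = ‖z - y‖ := by field_simp
      set k₀ := Nat.find hExists with hk₀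
      refine Set.mem_iUnion.2 ⟨k₀, Nat.find_spec hExists, ?_⟩
      rcases Nat.eq_zero_or_pos k₀ with h0 | hpos'
      · rw [h0]
        simp only [Nat.cast_zero, neg_zero, Real.rpow_zero, mul_one]
        have : ‖z - y‖ = dist y z := by rw [dist_eq_norm, norm_sub_rev]
        rw [this]
        exact (mem_ball.1 hy).le
      · have hmin := Nat.find_min hExists (show k₀ - 1 < k₀ by omega)
        push_neg at hmin
        have : ((k₀ - 1 : ℕ) : ℝ) = (k₀ : ℝ) - 1 := by
          have : (1:ℕ) ≤ k₀ := hpos'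
          push_cast [Nat.cast_sub this]; ring
        rw [this] at hmin
        calc ‖z - y‖ ≤ r * 2 ^ (-((k₀:ℝ) - 1) - 1) := hmin
          _ = r * 2 ^ (-(k₀:ℝ)) := by ring_nf
  calc ∫⁻ y in ball z r, ENNReal.ofReal (‖z - y‖ ^ (2 - (n:ℝ)))
      ≤ ∫⁻ y in {z} ∪ ⋃ k, A k, ENNReal.ofReal (‖z - y‖ ^ (2 - (n:ℝ))) :=
        lintegral_mono_set hcover
    _ ≤ (∫⁻ y in {z}, ENNReal.ofReal (‖z - y‖ ^ (2 - (n:ℝ))))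
        + ∫⁻ y in ⋃ k, A k, ENNReal.ofReal (‖z - y‖ ^ (2 - (n:ℝ))) :=
        lintegral_union_le _ _ _
    _ ≤ 0 + ENNReal.ofReal (V.toReal * 2 ^ (n:ℝ) * r ^ 2) * 2 := by
        gcongr
        · exact le_of_eq (setLIntegral_measure_zero _ _ (measure_singleton z))
        · apply dyadic_le (le_refl _)
            (c := fun k => ENNReal.ofReal ((r * 2 ^ (-(k:ℝ) - 1)) ^ (2 - (n:ℝ))))
          · intro k y hy
            exact ENNReal.ofReal_le_ofReal
              (Real.rpow_le_rpow_of_nonpos (hpos k) hy.1.le (by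
                have : (3:ℝ) ≤ (n:ℝ) := by exact_mod_cast hn
                linarith))
          · intro k
            have hsub : A k ⊆ closedBall z (r * 2 ^ (-(k:ℝ))) := by
              intro y hy
              rw [mem_closedBall, dist_eq_norm, norm_sub_rev]
              exact hy.2
            have hrk : (0:ℝ) ≤ r * 2 ^ (-(k:ℝ)) :=
              (mul_pos hr (Real.rpow_pos_of_pos two_pos _)).le
            have hm : volume (A k) ≤ ENNReal.ofReal ((r * 2 ^ (-(k:ℝ))) ^ n) * V := by
              calc volume (A k) ≤ volume (closedBall z (r * 2 ^ (-(k:ℝ)))) := measure_mono hsub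
                _ = ENNReal.ofReal ((r * 2 ^ (-(k:ℝ))) ^ n) * V := by
                    rw [Measure.addHaar_closedBall volume z hrk, finrank_euclideanSpace_fin]
            calc ENNReal.ofReal ((r * 2 ^ (-(k:ℝ) - 1)) ^ (2 - (n:ℝ))) * volume (A k)
                ≤ ENNReal.ofReal ((r * 2 ^ (-(k:ℝ) - 1)) ^ (2 - (n:ℝ)))
                  * (ENNReal.ofReal ((r * 2 ^ (-(k:ℝ))) ^ n) * V) := mul_le_mul_right hm _
              _ = ENNReal.ofReal ((r * 2 ^ (-(k:ℝ) - 1)) ^ (2 - (n:ℝ))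
                  * (r * 2 ^ (-(k:ℝ))) ^ n) * V := by
                  rw [← mul_assoc, ← ENNReal.ofReal_mul (Real.rpow_nonneg (hpos k).le _)]
              _ ≤ ENNReal.ofReal (2 ^ (n:ℝ) * r ^ 2 * 2⁻¹ ^ k) * V := by
                  apply mul_le_mul_left
                  apply ENNReal.ofReal_le_ofReal
                  rw [← Real.rpow_natCast (r * 2 ^ (-(k:ℝ))) n]
                  exact key_in (n:ℝ) k hr
              _ = ENNReal.ofReal (V.toReal * 2 ^ (n:ℝ) * r ^ 2) * 2⁻¹ ^ k := by
                  rw [show (V.toReal * 2 ^ (n:ℝ) * r ^ 2) = V.toReal * (2 ^ (n:ℝ) * r ^ 2) from by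
                      ring,
                    ENNReal.ofReal_mul ENNReal.toReal_nonneg, ENNReal.ofReal_toReal hVtop,
                    show (2:ℝ) ^ (n:ℝ) * r ^ 2 * 2⁻¹ ^ k = (2 ^ (n:ℝ) * r ^ 2) * 2⁻¹ ^ k from by
                      ring,
                    ENNReal.ofReal_mul (by positivity), ENNReal.ofReal_pow (by norm_num),
                    ofReal_half]
                  ring
    _ = ENNReal.ofReal (V.toReal * 2 ^ (n:ℝ) * r ^ 2) * 2 := by rw [zero_add]

lemma lout (hn : 3 ≤ n) {a : ℝ} (ha : 0 < a) :
    ∫⁻ y in {y : EuclideanSpace ℝ (Fin n) | a ≤ ‖y‖},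
      ENNReal.ofReal (‖y‖ ^ (-((n:ℝ) + 2))) ≤
      ENNReal.ofReal ((volume (ball (0 : EuclideanSpace ℝ (Fin n)) 1)).toReal
        * 2 ^ (n:ℝ) * a ^ (-(2:ℝ))) * 2 := by
  have hne : Nonempty (Fin n) := ⟨⟨0, by omega⟩⟩
  have hnn : Nontrivial (EuclideanSpace ℝ (Fin n)) := inferInstance
  set V : ℝ≥0∞ := volume (ball (0 : EuclideanSpace ℝ (Fin n)) 1) with hV
  have hVtop : V ≠ ⊤ := measure_ball_lt_top.ne
  set A : ℕ → Set (EuclideanSpace ℝ (Fin n)) := fun k =>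
    {y | a * 2 ^ (k:ℝ) ≤ ‖y‖ ∧ ‖y‖ < a * 2 ^ ((k:ℝ) + 1)} with hA
  have hpos : ∀ k : ℕ, (0:ℝ) < a * 2 ^ (k:ℝ) :=
    fun k => mul_pos ha (Real.rpow_pos_of_pos two_pos _)
  have hcover : {y : EuclideanSpace ℝ (Fin n) | a ≤ ‖y‖} ⊆ ⋃ k, A k := by
    intro y hy
    have hy' : a ≤ ‖y‖ := hy
    have hExists : ∃ k : ℕ, ‖y‖ < a * 2 ^ ((k:ℝ) + 1) := by
      obtain ⟨m, hm⟩ := pow_unbounded_of_one_lt (‖y‖ / a) (by norm_num : (1:ℝ) < 2)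
      refine ⟨m, ?_⟩
      have h1 : ‖y‖ < a * 2 ^ (m:ℝ) := by
        rw [Real.rpow_natCast]
        calc ‖y‖ = a * (‖y‖ / a) := by field_simp
          _ < a * 2 ^ m := mul_lt_mul_of_pos_left hm ha
      calc ‖y‖ < a * 2 ^ (m:ℝ) := h1
        _ ≤ a * 2 ^ ((m:ℝ) + 1) := by
          apply mul_le_mul_of_nonneg_left _ ha.le
          exact Real.rpow_le_rpow_of_exponent_le one_le_two (by linarith)
    set k₀ := Nat.find hExists with hk₀
    refine Set.mem_iUnion.2 ⟨k₀, ?_, Nat.find_spec hExists⟩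
    rcases Nat.eq_zero_or_pos k₀ with h0 | hpos'
    · rw [h0]
      simpa using hy'
    · have hmin := Nat.find_min hExists (show k₀ - 1 < k₀ by omega)
      push_neg at hmin
      have hc : ((k₀ - 1 : ℕ) : ℝ) = (k₀ : ℝ) - 1 := by
        have h1 : (1:ℕ) ≤ k₀ := hpos'
        push_cast [Nat.cast_sub h1]; ring
      rw [hc] at hmin
      calc a * 2 ^ (k₀:ℝ) = a * 2 ^ ((k₀:ℝ) - 1 + 1) := by ring_nf
        _ ≤ ‖y‖ := hmin
  apply le_trans (lintegral_mono_set hcover)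
  apply dyadic_le (le_refl _)
    (c := fun k => ENNReal.ofReal ((a * 2 ^ (k:ℝ)) ^ (-((n:ℝ) + 2))))
  · intro k y hy
    exact ENNReal.ofReal_le_ofReal
      (Real.rpow_le_rpow_of_nonpos (hpos k) hy.1 (by
        have : (0:ℝ) ≤ (n:ℝ) := Nat.cast_nonneg n
        linarith))
  · intro k
    have hrk : (0:ℝ) ≤ a * 2 ^ ((k:ℝ) + 1) :=
      (mul_pos ha (Real.rpow_pos_of_pos two_pos _)).le
    have hm : volume (A k) ≤ ENNReal.ofReal ((a * 2 ^ ((k:ℝ) + 1)) ^ n) * V := by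
      calc volume (A k) ≤ volume (ball (0 : EuclideanSpace ℝ (Fin n)) (a * 2 ^ ((k:ℝ) + 1))) := by
            apply measure_mono
            intro y hy
            rw [mem_ball, dist_eq_norm, sub_zero]
            exact hy.2
        _ = ENNReal.ofReal ((a * 2 ^ ((k:ℝ) + 1)) ^ n) * V := by
            rw [Measure.addHaar_ball volume _ hrk, finrank_euclideanSpace_fin]
    calc ENNReal.ofReal ((a * 2 ^ (k:ℝ)) ^ (-((n:ℝ) + 2))) * volume (A k)
        ≤ ENNReal.ofReal ((a * 2 ^ (k:ℝ)) ^ (-((n:ℝ) + 2)))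
          * (ENNReal.ofReal ((a * 2 ^ ((k:ℝ) + 1)) ^ n) * V) := mul_le_mul_right hm _
      _ = ENNReal.ofReal ((a * 2 ^ (k:ℝ)) ^ (-((n:ℝ) + 2))
          * (a * 2 ^ ((k:ℝ) + 1)) ^ n) * V := by
          rw [← mul_assoc, ← ENNReal.ofReal_mul (Real.rpow_nonneg (hpos k).le _)]
      _ ≤ ENNReal.ofReal (2 ^ (n:ℝ) * a ^ (-(2:ℝ)) * 2⁻¹ ^ k) * V := by
          apply mul_le_mul_left
          apply ENNReal.ofReal_le_ofReal
          rw [← Real.rpow_natCast (a * 2 ^ ((k:ℝ) + 1)) n]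
          exact key_out (n:ℝ) k ha
      _ = ENNReal.ofReal (V.toReal * 2 ^ (n:ℝ) * a ^ (-(2:ℝ))) * 2⁻¹ ^ k := by
          rw [show (V.toReal * 2 ^ (n:ℝ) * a ^ (-(2:ℝ)))
              = V.toReal * (2 ^ (n:ℝ) * a ^ (-(2:ℝ))) from by ring,
            ENNReal.ofReal_mul ENNReal.toReal_nonneg, ENNReal.ofReal_toReal hVtop,
            show (2:ℝ) ^ (n:ℝ) * a ^ (-(2:ℝ)) * 2⁻¹ ^ k
              = (2 ^ (n:ℝ) * a ^ (-(2:ℝ))) * 2⁻¹ ^ k from by ring,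
            ENNReal.ofReal_mul (by positivity), ENNReal.ofReal_pow (by norm_num),
            ofReal_half]
          ring

lemma sq_rpow {x : ℝ} (hx : 0 < x) (e : ℝ) : (x ^ 2) ^ e = x ^ (2 * e) := by
  rw [← Real.rpow_natCast x 2, ← Real.rpow_mul hx.le]
  norm_num

variable {n : ℕ}

lemma F2 (hn : 3 ≤ n) {δ : ℝ} (h0 : 0 < δ) :
    ∫⁻ y in {y : EuclideanSpace ℝ (Fin n) | ‖y‖ ≤ Real.sqrt δ},
      ENNReal.ofReal ((δ ^ 2 + ‖y‖ ^ 2) ^ (-(((n:ℝ) + 2) / 2))) ≤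
      ENNReal.ofReal ((volume (ball (0 : EuclideanSpace ℝ (Fin n)) 1)).toReal
        * 2 ^ (n:ℝ) * 3 * δ ^ (-(2:ℝ))) := by
  have hne : Nonempty (Fin n) := ⟨⟨0, by omega⟩⟩
  set V : ℝ≥0∞ := volume (ball (0 : EuclideanSpace ℝ (Fin n)) 1) with hV
  have hVtop : V ≠ ⊤ := measure_ball_lt_top.ne
  have hVnn : (0:ℝ) ≤ V.toReal := ENNReal.toReal_nonneg
  have h2N : (1:ℝ) ≤ 2 ^ (n:ℝ) :=
    Real.one_le_rpow one_le_two (Nat.cast_nonneg n)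
  have hexp : -(((n:ℝ) + 2) / 2) ≤ 0 := by
    have : (0:ℝ) ≤ (n:ℝ) := Nat.cast_nonneg n
    linarith
  have hcover : {y : EuclideanSpace ℝ (Fin n) | ‖y‖ ≤ Real.sqrt δ} ⊆
      closedBall 0 δ ∪ {y | δ ≤ ‖y‖} := by
    intro y _
    by_cases h : ‖y‖ ≤ δ
    · left; simpa [mem_closedBall, dist_zero_right] using h
    · right; exact (not_le.1 h).le
  refine le_trans (lintegral_mono_set hcover) (le_trans (lintegral_union_le _ _ _) ?_)
  have hp1 : ∫⁻ y in closedBall (0 : EuclideanSpace ℝ (Fin n)) δ,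
      ENNReal.ofReal ((δ ^ 2 + ‖y‖ ^ 2) ^ (-(((n:ℝ) + 2) / 2))) ≤
      ENNReal.ofReal (V.toReal * δ ^ (-(2:ℝ))) := by
    have hpt : ∀ y : EuclideanSpace ℝ (Fin n), y ∈ closedBall (0 : EuclideanSpace ℝ (Fin n)) δ →
        ENNReal.ofReal ((δ ^ 2 + ‖y‖ ^ 2) ^ (-(((n:ℝ) + 2) / 2))) ≤
        ENNReal.ofReal (δ ^ (-((n:ℝ) + 2))) := by
      intro y _
      apply ENNReal.ofReal_le_ofReal
      have h1 : (δ ^ 2 + ‖y‖ ^ 2) ^ (-(((n:ℝ) + 2) / 2)) ≤ (δ ^ 2) ^ (-(((n:ℝ) + 2) / 2)) :=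
        Real.rpow_le_rpow_of_nonpos (by positivity) (by nlinarith [sq_nonneg ‖y‖]) hexp
      calc (δ ^ 2 + ‖y‖ ^ 2) ^ (-(((n:ℝ) + 2) / 2)) ≤ (δ ^ 2) ^ (-(((n:ℝ) + 2) / 2)) := h1
        _ = δ ^ (-((n:ℝ) + 2)) := by rw [sq_rpow h0]; ring_nf
    calc ∫⁻ y in closedBall (0 : EuclideanSpace ℝ (Fin n)) δ,
        ENNReal.ofReal ((δ ^ 2 + ‖y‖ ^ 2) ^ (-(((n:ℝ) + 2) / 2)))
        ≤ ∫⁻ _ in closedBall (0 : EuclideanSpace ℝ (Fin n)) δ,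
          ENNReal.ofReal (δ ^ (-((n:ℝ) + 2))) := setLIntegral_mono measurable_const hpt
      _ = ENNReal.ofReal (δ ^ (-((n:ℝ) + 2))) * volume (closedBall (0 : EuclideanSpace ℝ (Fin n)) δ) :=
          setLIntegral_const _ _
      _ = ENNReal.ofReal (V.toReal * δ ^ (-(2:ℝ))) := by
          have hVeq : V = ENNReal.ofReal V.toReal := (ENNReal.ofReal_toReal hVtop).symm
          rw [Measure.addHaar_closedBall volume _ h0.le, finrank_euclideanSpace_fin, ← hV]
          conv_lhs => rw [hVeq]
          rw [← ENNReal.ofReal_mul (by positivity), ← ENNReal.ofReal_mul (by positivity)]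
          congr 1
          rw [← Real.rpow_natCast δ n,
            show δ ^ (-((n:ℝ) + 2)) * (δ ^ ((n:ℕ):ℝ) * V.toReal)
              = δ ^ (-((n:ℝ) + 2) + (n:ℝ)) * V.toReal from by rw [Real.rpow_add h0]; ring,
            show -((n:ℝ) + 2) + (n:ℝ) = -2 from by ring]
          ring
  have hp2 : ∫⁻ y in {y : EuclideanSpace ℝ (Fin n) | δ ≤ ‖y‖},
      ENNReal.ofReal ((δ ^ 2 + ‖y‖ ^ 2) ^ (-(((n:ℝ) + 2) / 2))) ≤
      ENNReal.ofReal (V.toReal * 2 ^ (n:ℝ) * δ ^ (-(2:ℝ))) * 2 := by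
    have hpt : ∀ y : EuclideanSpace ℝ (Fin n), y ∈ {y : EuclideanSpace ℝ (Fin n) | δ ≤ ‖y‖} →
        ENNReal.ofReal ((δ ^ 2 + ‖y‖ ^ 2) ^ (-(((n:ℝ) + 2) / 2))) ≤
        ENNReal.ofReal (‖y‖ ^ (-((n:ℝ) + 2))) := by
      intro y hy
      apply ENNReal.ofReal_le_ofReal
      have hy0 : 0 < ‖y‖ := lt_of_lt_of_le h0 hy
      calc (δ ^ 2 + ‖y‖ ^ 2) ^ (-(((n:ℝ) + 2) / 2)) ≤ (‖y‖ ^ 2) ^ (-(((n:ℝ) + 2) / 2)) :=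
            Real.rpow_le_rpow_of_nonpos (by positivity) (by nlinarith [sq_nonneg δ]) hexp
        _ = ‖y‖ ^ (-((n:ℝ) + 2)) := by rw [sq_rpow hy0]; ring_nf
    have hmeas : Measurable fun y : EuclideanSpace ℝ (Fin n) =>
        ENNReal.ofReal (‖y‖ ^ (-((n:ℝ) + 2))) := by fun_prop
    exact le_trans (setLIntegral_mono hmeas hpt) (lout hn h0)
  calc (∫⁻ y in closedBall (0 : EuclideanSpace ℝ (Fin n)) δ,
        ENNReal.ofReal ((δ ^ 2 + ‖y‖ ^ 2) ^ (-(((n:ℝ) + 2) / 2))))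
      + ∫⁻ y in {y : EuclideanSpace ℝ (Fin n) | δ ≤ ‖y‖},
        ENNReal.ofReal ((δ ^ 2 + ‖y‖ ^ 2) ^ (-(((n:ℝ) + 2) / 2)))
      ≤ ENNReal.ofReal (V.toReal * δ ^ (-(2:ℝ)))
        + ENNReal.ofReal (V.toReal * 2 ^ (n:ℝ) * δ ^ (-(2:ℝ))) * 2 := add_le_add hp1 hp2
    _ = ENNReal.ofReal (V.toReal * δ ^ (-(2:ℝ))
        + V.toReal * 2 ^ (n:ℝ) * δ ^ (-(2:ℝ)) * 2) := by
        rw [ENNReal.ofReal_add (by positivity) (by positivity),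
          show ENNReal.ofReal (V.toReal * 2 ^ (n:ℝ) * δ ^ (-(2:ℝ)) * 2)
            = ENNReal.ofReal (V.toReal * 2 ^ (n:ℝ) * δ ^ (-(2:ℝ))) * 2 from by
            rw [ENNReal.ofReal_mul (by positivity)]; norm_num]
    _ ≤ ENNReal.ofReal (V.toReal * 2 ^ (n:ℝ) * 3 * δ ^ (-(2:ℝ))) := by
        apply ENNReal.ofReal_le_ofReal
        have hd2 : (0:ℝ) ≤ δ ^ (-(2:ℝ)) := Real.rpow_nonneg h0.le _
        have h3 : V.toReal * δ ^ (-(2:ℝ)) ≤ V.toReal * 2 ^ (n:ℝ) * δ ^ (-(2:ℝ)) := by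
          have h4 := mul_le_mul_of_nonneg_right (mul_le_mul_of_nonneg_left h2N hVnn) hd2
          nlinarith [h4]
        nlinarith

lemma F3 (hn : 3 ≤ n) {δ : ℝ} (h0 : 0 < δ) (h1 : δ ≤ 1) :
    ∫⁻ y in {y : EuclideanSpace ℝ (Fin n) | ‖y‖ ≤ Real.sqrt δ},
      ENNReal.ofReal ((δ ^ 2 + ‖y‖ ^ 2) ^ (1 - (n:ℝ) / 2)) ≤
      ENNReal.ofReal ((volume (ball (0 : EuclideanSpace ℝ (Fin n)) 1)).toReal
        * 2 ^ (n:ℝ) * 9 * δ) := by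
  have hne : Nonempty (Fin n) := ⟨⟨0, by omega⟩⟩
  set V : ℝ≥0∞ := volume (ball (0 : EuclideanSpace ℝ (Fin n)) 1) with hV
  have hVtop : V ≠ ⊤ := measure_ball_lt_top.ne
  have hVnn : (0:ℝ) ≤ V.toReal := ENNReal.toReal_nonneg
  have h2N : (1:ℝ) ≤ 2 ^ (n:ℝ) :=
    Real.one_le_rpow one_le_two (Nat.cast_nonneg n)
  have hN3 : (3:ℝ) ≤ (n:ℝ) := by exact_mod_cast hn
  have hexp : 1 - (n:ℝ) / 2 ≤ 0 := by linarith
  have hs0 : 0 < Real.sqrt δ := Real.sqrt_pos.2 h0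
  set T : Set (EuclideanSpace ℝ (Fin n)) := {y | δ ≤ ‖y‖ ∧ ‖y‖ ≤ Real.sqrt δ} with hT
  have hcover : {y : EuclideanSpace ℝ (Fin n) | ‖y‖ ≤ Real.sqrt δ} ⊆
      closedBall 0 δ ∪ T := by
    intro y hy
    by_cases h : ‖y‖ ≤ δ
    · left; simpa [mem_closedBall, dist_zero_right] using h
    · right; exact ⟨(not_le.1 h).le, hy⟩
  refine le_trans (lintegral_mono_set hcover) (le_trans (lintegral_union_le _ _ _) ?_)
  have hp1 : ∫⁻ y in closedBall (0 : EuclideanSpace ℝ (Fin n)) δ,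
      ENNReal.ofReal ((δ ^ 2 + ‖y‖ ^ 2) ^ (1 - (n:ℝ) / 2)) ≤
      ENNReal.ofReal (V.toReal * δ ^ (2:ℝ)) := by
    have hpt : ∀ y : EuclideanSpace ℝ (Fin n), y ∈ closedBall (0 : EuclideanSpace ℝ (Fin n)) δ →
        ENNReal.ofReal ((δ ^ 2 + ‖y‖ ^ 2) ^ (1 - (n:ℝ) / 2)) ≤
        ENNReal.ofReal (δ ^ (2 - (n:ℝ))) := by
      intro y _
      apply ENNReal.ofReal_le_ofReal
      calc (δ ^ 2 + ‖y‖ ^ 2) ^ (1 - (n:ℝ) / 2) ≤ (δ ^ 2) ^ (1 - (n:ℝ) / 2) :=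
            Real.rpow_le_rpow_of_nonpos (by positivity) (by nlinarith [sq_nonneg ‖y‖]) hexp
        _ = δ ^ (2 - (n:ℝ)) := by rw [sq_rpow h0]; ring_nf
    calc ∫⁻ y in closedBall (0 : EuclideanSpace ℝ (Fin n)) δ,
        ENNReal.ofReal ((δ ^ 2 + ‖y‖ ^ 2) ^ (1 - (n:ℝ) / 2))
        ≤ ∫⁻ _ in closedBall (0 : EuclideanSpace ℝ (Fin n)) δ,
          ENNReal.ofReal (δ ^ (2 - (n:ℝ))) := setLIntegral_mono measurable_const hpt
      _ = ENNReal.ofReal (δ ^ (2 - (n:ℝ)))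
          * volume (closedBall (0 : EuclideanSpace ℝ (Fin n)) δ) := setLIntegral_const _ _
      _ = ENNReal.ofReal (V.toReal * δ ^ (2:ℝ)) := by
          have hVeq : V = ENNReal.ofReal V.toReal := (ENNReal.ofReal_toReal hVtop).symm
          rw [Measure.addHaar_closedBall volume _ h0.le, finrank_euclideanSpace_fin, ← hV]
          conv_lhs => rw [hVeq]
          rw [← ENNReal.ofReal_mul (by positivity), ← ENNReal.ofReal_mul (by positivity)]
          congr 1
          rw [← Real.rpow_natCast δ n,
            show δ ^ (2 - (n:ℝ)) * (δ ^ ((n:ℕ):ℝ) * V.toReal)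
              = δ ^ (2 - (n:ℝ) + (n:ℝ)) * V.toReal from by rw [Real.rpow_add h0]; ring,
            show 2 - (n:ℝ) + (n:ℝ) = 2 from by ring]
          ring
  have hp2 : ∫⁻ y in T, ENNReal.ofReal ((δ ^ 2 + ‖y‖ ^ 2) ^ (1 - (n:ℝ) / 2)) ≤
      ENNReal.ofReal (V.toReal * 2 ^ (n:ℝ) * (4 * δ)) * 2 := by
    have hpt : ∀ y : EuclideanSpace ℝ (Fin n), y ∈ T →
        ENNReal.ofReal ((δ ^ 2 + ‖y‖ ^ 2) ^ (1 - (n:ℝ) / 2)) ≤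
        ENNReal.ofReal (‖y‖ ^ (2 - (n:ℝ))) := by
      intro y hy
      apply ENNReal.ofReal_le_ofReal
      have hy0 : 0 < ‖y‖ := lt_of_lt_of_le h0 hy.1
      calc (δ ^ 2 + ‖y‖ ^ 2) ^ (1 - (n:ℝ) / 2) ≤ (‖y‖ ^ 2) ^ (1 - (n:ℝ) / 2) :=
            Real.rpow_le_rpow_of_nonpos (by positivity) (by nlinarith [sq_nonneg δ]) hexp
        _ = ‖y‖ ^ (2 - (n:ℝ)) := by rw [sq_rpow hy0]; ring_nf
    have hmeas : Measurable fun y : EuclideanSpace ℝ (Fin n) =>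
        ENNReal.ofReal (‖y‖ ^ (2 - (n:ℝ))) := by fun_prop
    have hTsub : T ⊆ ball (0 : EuclideanSpace ℝ (Fin n)) (2 * Real.sqrt δ) := by
      intro y hy
      rw [mem_ball, dist_zero_right]
      linarith [hy.2]
    calc ∫⁻ y in T, ENNReal.ofReal ((δ ^ 2 + ‖y‖ ^ 2) ^ (1 - (n:ℝ) / 2))
        ≤ ∫⁻ y in T, ENNReal.ofReal (‖y‖ ^ (2 - (n:ℝ))) := setLIntegral_mono hmeas hpt
      _ ≤ ∫⁻ y in ball (0 : EuclideanSpace ℝ (Fin n)) (2 * Real.sqrt δ),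
          ENNReal.ofReal (‖y‖ ^ (2 - (n:ℝ))) := lintegral_mono_set hTsub
      _ = ∫⁻ y in ball (0 : EuclideanSpace ℝ (Fin n)) (2 * Real.sqrt δ),
          ENNReal.ofReal (‖(0 : EuclideanSpace ℝ (Fin n)) - y‖ ^ (2 - (n:ℝ))) := by
          simp only [zero_sub, norm_neg]
      _ ≤ ENNReal.ofReal (V.toReal * 2 ^ (n:ℝ) * (2 * Real.sqrt δ) ^ 2) * 2 :=
          lin hn _ (by positivity)
      _ = ENNReal.ofReal (V.toReal * 2 ^ (n:ℝ) * (4 * δ)) * 2 := by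
          rw [show (2 * Real.sqrt δ) ^ 2 = 4 * (Real.sqrt δ ^ 2) from by ring,
            Real.sq_sqrt h0.le]
  calc (∫⁻ y in closedBall (0 : EuclideanSpace ℝ (Fin n)) δ,
        ENNReal.ofReal ((δ ^ 2 + ‖y‖ ^ 2) ^ (1 - (n:ℝ) / 2)))
      + ∫⁻ y in T, ENNReal.ofReal ((δ ^ 2 + ‖y‖ ^ 2) ^ (1 - (n:ℝ) / 2))
      ≤ ENNReal.ofReal (V.toReal * δ ^ (2:ℝ))
        + ENNReal.ofReal (V.toReal * 2 ^ (n:ℝ) * (4 * δ)) * 2 := add_le_add hp1 hp2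
    _ = ENNReal.ofReal (V.toReal * δ ^ (2:ℝ) + V.toReal * 2 ^ (n:ℝ) * (4 * δ) * 2) := by
        rw [ENNReal.ofReal_add (by positivity) (by positivity),
          show ENNReal.ofReal (V.toReal * 2 ^ (n:ℝ) * (4 * δ) * 2)
            = ENNReal.ofReal (V.toReal * 2 ^ (n:ℝ) * (4 * δ)) * 2 from by
            rw [ENNReal.ofReal_mul (by positivity)]; norm_num]
    _ ≤ ENNReal.ofReal (V.toReal * 2 ^ (n:ℝ) * 9 * δ) := by
        apply ENNReal.ofReal_le_ofReal
        have hδ2 : δ ^ (2:ℝ) ≤ δ := by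
          rw [Real.rpow_two]
          nlinarith
        have h3 : V.toReal * δ ^ (2:ℝ) ≤ V.toReal * 2 ^ (n:ℝ) * δ := by
          have h4 : V.toReal * δ ^ (2:ℝ) ≤ V.toReal * δ := by nlinarith [Real.rpow_nonneg h0.le (2:ℝ)]
          have h5 : V.toReal * δ ≤ V.toReal * 2 ^ (n:ℝ) * δ := by
            have := mul_le_mul_of_nonneg_right (mul_le_mul_of_nonneg_left h2N hVnn) h0.le
            nlinarith [this]
          linarith
        nlinarith

set_option maxHeartbeats 2000000 in
lemma aux1 (n : ℕ) (hn : 3 ≤ n) (C₀ : ℝ) (hC₀ : 0 < C₀)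
    (G : EuclideanSpace ℝ (Fin n) → EuclideanSpace ℝ (Fin n) → ℝ)
    (hG : ∀ x y, 0 ≤ G x y ∧ G x y ≤ C₀ * ‖x - y‖ ^ (2 - (n : ℝ))) :
    ∃ C : ℝ, 0 < C ∧ ∀ (δ : ℝ), 0 < δ → δ ≤ 1 →
      ∀ x₀ : EuclideanSpace ℝ (Fin n), Real.sqrt δ ≤ ‖x₀‖ →
        (∫ y in {y : EuclideanSpace ℝ (Fin n) | ‖y‖ ≤ Real.sqrt δ},
            G x₀ y * (δ ^ (((n : ℝ) - 2) / 2) *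
              (δ ^ 2 + ‖y‖ ^ 2) ^ (1 - (n : ℝ) / 2)) ^ (((n : ℝ) + 2) / ((n : ℝ) - 2))) ≤
          C * (δ ^ (((n : ℝ) - 2) / 2) * (δ ^ 2 + ‖x₀‖ ^ 2) ^ (1 - (n : ℝ) / 2)) := by
  have hne : Nonempty (Fin n) := ⟨⟨0, by omega⟩⟩
  set N : ℝ := (n : ℝ) with hNdef
  have hN3 : (3:ℝ) ≤ N := by rw [hNdef]; exact_mod_cast hn
  set Vt : ℝ := (volume (ball (0 : EuclideanSpace ℝ (Fin n)) 1)).toReal with hVt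
  have hVpos : 0 < Vt := ENNReal.toReal_pos (Metric.measure_ball_pos volume 0 one_pos).ne'
    measure_ball_lt_top.ne
  have hpow : ∀ e f : ℝ, e ≤ f → (2:ℝ) ^ e ≤ 2 ^ f :=
    fun e f h => Real.rpow_le_rpow_of_exponent_le one_le_two h
  refine ⟨C₀ * Vt * 2 ^ (3 * N + 10), by positivity, ?_⟩
  intro δ h0 h1 x₀ hx₀
  set t : ℝ := ‖x₀‖ with ht
  have hs0 : 0 < Real.sqrt δ := Real.sqrt_pos.2 h0
  have ht0 : 0 < t := lt_of_lt_of_le hs0 hx₀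
  have hδR : δ ≤ Real.sqrt δ := by
    have h4 := Real.sqrt_le_sqrt (show δ ^ 2 ≤ δ by nlinarith)
    rwa [Real.sqrt_sq h0.le] at h4
  have hδt : δ ≤ t := hδR.trans hx₀
  have hδt2 : δ ≤ t ^ 2 := by
    have h4 : Real.sqrt δ ^ 2 ≤ t ^ 2 := by nlinarith
    rwa [Real.sq_sqrt h0.le] at h4
  set S : Set (EuclideanSpace ℝ (Fin n)) := {y | ‖y‖ ≤ Real.sqrt δ} with hS
  -- rewrite the W-power
  have hne2 : N - 2 ≠ 0 := by intro h; nlinarith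
  have hW : ∀ y : EuclideanSpace ℝ (Fin n),
      (δ ^ ((N - 2) / 2) * (δ ^ 2 + ‖y‖ ^ 2) ^ (1 - N / 2)) ^ ((N + 2) / (N - 2))
      = δ ^ ((N + 2) / 2) * (δ ^ 2 + ‖y‖ ^ 2) ^ (-((N + 2) / 2)) := by
    intro y
    have hb : (0:ℝ) < δ ^ 2 + ‖y‖ ^ 2 := by positivity
    rw [Real.mul_rpow (by positivity) (by positivity), ← Real.rpow_mul h0.le,
      ← Real.rpow_mul hb.le,
      show (N - 2) / 2 * ((N + 2) / (N - 2)) = (N + 2) / 2 from by field_simp,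
      show (1 - N / 2) * ((N + 2) / (N - 2)) = -((N + 2) / 2) from by field_simp; ring]
  simp only [hW]
  set P : EuclideanSpace ℝ (Fin n) → ℝ :=
    fun y => δ ^ ((N + 2) / 2) * (δ ^ 2 + ‖y‖ ^ 2) ^ (-((N + 2) / 2)) with hPdef
  have hP0 : ∀ y, 0 ≤ P y := fun y => by positivity
  have hRHS0 : 0 ≤ C₀ * Vt * 2 ^ (3 * N + 10) * (δ ^ ((N - 2) / 2)
      * (δ ^ 2 + t ^ 2) ^ (1 - N / 2)) := by positivity
  by_cases hInt : IntegrableOn (fun y => G x₀ y * P y) S volume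
  swap
  · rw [MeasureTheory.integral_undef hInt]
    exact hRHS0
  rw [MeasureTheory.integral_eq_lintegral_of_nonneg_ae
    (Filter.Eventually.of_forall fun y => mul_nonneg (hG x₀ y).1 (hP0 y))
    hInt.aestronglyMeasurable]
  apply ENNReal.toReal_le_of_le_ofReal hRHS0
  -- the two sub-regions
  set S₁ : Set (EuclideanSpace ℝ (Fin n)) := S ∩ {y | ‖y‖ ≤ t / 2} with hS₁
  set S₂ : Set (EuclideanSpace ℝ (Fin n)) := S ∩ {y | t / 2 < ‖y‖} with hS₂
  have hSsub : S ⊆ S₁ ∪ S₂ := by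
    intro y hy
    by_cases h : ‖y‖ ≤ t / 2
    · exact Or.inl ⟨hy, h⟩
    · exact Or.inr ⟨hy, not_le.1 h⟩
  set c₁ : ℝ := C₀ * (t / 2) ^ (2 - N) * δ ^ ((N + 2) / 2) with hc₁
  set c₂ : ℝ := C₀ * δ ^ ((N + 2) / 2) * (t / 2) ^ (-(N + 2)) with hc₂
  have hc₁0 : 0 ≤ c₁ := by positivity
  have hc₂0 : 0 ≤ c₂ := by positivity
  have hmono : ∫⁻ y in S, ENNReal.ofReal (G x₀ y * P y) ≤
      ∫⁻ y in S, ENNReal.ofReal (C₀ * ‖x₀ - y‖ ^ (2 - N) * P y) :=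
    lintegral_mono fun y => ENNReal.ofReal_le_ofReal
      (mul_le_mul_of_nonneg_right (hG x₀ y).2 (hP0 y))
  have hb1 : ∫⁻ y in S₁, ENNReal.ofReal (C₀ * ‖x₀ - y‖ ^ (2 - N) * P y) ≤
      ENNReal.ofReal (c₁ * (Vt * 2 ^ N * 3 * δ ^ (-(2:ℝ)))) := by
    have hpt : ∀ y ∈ S₁, ENNReal.ofReal (C₀ * ‖x₀ - y‖ ^ (2 - N) * P y) ≤
        ENNReal.ofReal c₁ * ENNReal.ofReal ((δ ^ 2 + ‖y‖ ^ 2) ^ (-((N + 2) / 2))) := by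
      intro y hy
      rw [← ENNReal.ofReal_mul hc₁0]
      apply ENNReal.ofReal_le_ofReal
      have hd : t / 2 ≤ ‖x₀ - y‖ := by
        have h5 : ‖x₀‖ - ‖y‖ ≤ ‖x₀ - y‖ := norm_sub_norm_le x₀ y
        have h6 : ‖y‖ ≤ t / 2 := hy.2
        linarith
      have hrr : ‖x₀ - y‖ ^ (2 - N) ≤ (t / 2) ^ (2 - N) :=
        Real.rpow_le_rpow_of_nonpos (by positivity) hd (by linarith)
      calc C₀ * ‖x₀ - y‖ ^ (2 - N) * P y ≤ C₀ * (t / 2) ^ (2 - N) * P y :=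
            mul_le_mul_of_nonneg_right
              (mul_le_mul_of_nonneg_left hrr hC₀.le) (hP0 y)
        _ = c₁ * (δ ^ 2 + ‖y‖ ^ 2) ^ (-((N + 2) / 2)) := by rw [hPdef, hc₁]; ring
    calc ∫⁻ y in S₁, ENNReal.ofReal (C₀ * ‖x₀ - y‖ ^ (2 - N) * P y)
        ≤ ∫⁻ y in S₁, ENNReal.ofReal c₁
          * ENNReal.ofReal ((δ ^ 2 + ‖y‖ ^ 2) ^ (-((N + 2) / 2))) :=
          setLIntegral_mono (by fun_prop) hpt
      _ = ENNReal.ofReal c₁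
          * ∫⁻ y in S₁, ENNReal.ofReal ((δ ^ 2 + ‖y‖ ^ 2) ^ (-((N + 2) / 2))) :=
          lintegral_const_mul' _ _ ENNReal.ofReal_ne_top
      _ ≤ ENNReal.ofReal c₁
          * ∫⁻ y in S, ENNReal.ofReal ((δ ^ 2 + ‖y‖ ^ 2) ^ (-((N + 2) / 2))) :=
          mul_le_mul_right (lintegral_mono_set Set.inter_subset_left) _
      _ ≤ ENNReal.ofReal c₁ * ENNReal.ofReal (Vt * 2 ^ N * 3 * δ ^ (-(2:ℝ))) :=
          mul_le_mul_right (F2 hn h0) _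
      _ = ENNReal.ofReal (c₁ * (Vt * 2 ^ N * 3 * δ ^ (-(2:ℝ)))) :=
          (ENNReal.ofReal_mul hc₁0).symm
  have hb2 : ∫⁻ y in S₂, ENNReal.ofReal (C₀ * ‖x₀ - y‖ ^ (2 - N) * P y) ≤
      ENNReal.ofReal (c₂ * (Vt * 2 ^ N * (3 * t) ^ 2 * 2)) := by
    have hpt : ∀ y ∈ S₂, ENNReal.ofReal (C₀ * ‖x₀ - y‖ ^ (2 - N) * P y) ≤
        ENNReal.ofReal c₂ * ENNReal.ofReal (‖x₀ - y‖ ^ (2 - N)) := by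
      intro y hy
      rw [← ENNReal.ofReal_mul hc₂0]
      apply ENNReal.ofReal_le_ofReal
      have hyt : t / 2 < ‖y‖ := hy.2
      have hw : (δ ^ 2 + ‖y‖ ^ 2) ^ (-((N + 2) / 2)) ≤ (t / 2) ^ (-(N + 2)) := by
        calc (δ ^ 2 + ‖y‖ ^ 2) ^ (-((N + 2) / 2)) ≤ ((t / 2) ^ 2) ^ (-((N + 2) / 2)) := by
              apply Real.rpow_le_rpow_of_nonpos (by positivity) (by nlinarith [sq_nonneg δ])
              have : (0:ℝ) ≤ N := by linarith
              linarith
          _ = (t / 2) ^ (-(N + 2)) := by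
              rw [sq_rpow (by positivity : (0:ℝ) < t / 2)]; ring_nf
      calc C₀ * ‖x₀ - y‖ ^ (2 - N) * P y
          = (C₀ * δ ^ ((N + 2) / 2) * ‖x₀ - y‖ ^ (2 - N))
            * (δ ^ 2 + ‖y‖ ^ 2) ^ (-((N + 2) / 2)) := by rw [hPdef]; ring
        _ ≤ (C₀ * δ ^ ((N + 2) / 2) * ‖x₀ - y‖ ^ (2 - N)) * (t / 2) ^ (-(N + 2)) :=
            mul_le_mul_of_nonneg_left hw (by positivity)
        _ = c₂ * ‖x₀ - y‖ ^ (2 - N) := by rw [hc₂]; ring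
    have hS₂sub : S₂ ⊆ ball x₀ (3 * t) := by
      intro y hy
      rw [mem_ball, dist_eq_norm]
      have h7 : ‖x₀ - y‖ ≤ ‖x₀‖ + ‖y‖ := norm_sub_le x₀ y
      have h8 : ‖y‖ ≤ Real.sqrt δ := hy.1
      have h9 : ‖x₀ - y‖ ≤ 2 * t := by linarith [hx₀]
      rw [norm_sub_rev] at h9
      linarith
    calc ∫⁻ y in S₂, ENNReal.ofReal (C₀ * ‖x₀ - y‖ ^ (2 - N) * P y)
        ≤ ∫⁻ y in S₂, ENNReal.ofReal c₂ * ENNReal.ofReal (‖x₀ - y‖ ^ (2 - N)) :=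
          setLIntegral_mono (by fun_prop) hpt
      _ = ENNReal.ofReal c₂ * ∫⁻ y in S₂, ENNReal.ofReal (‖x₀ - y‖ ^ (2 - N)) :=
          lintegral_const_mul' _ _ ENNReal.ofReal_ne_top
      _ ≤ ENNReal.ofReal c₂ * ∫⁻ y in ball x₀ (3 * t), ENNReal.ofReal (‖x₀ - y‖ ^ (2 - N)) :=
          mul_le_mul_right (lintegral_mono_set hS₂sub) _
      _ ≤ ENNReal.ofReal c₂ * (ENNReal.ofReal (Vt * 2 ^ N * (3 * t) ^ 2) * 2) :=
          mul_le_mul_right (lin hn x₀ (by positivity)) _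
      _ = ENNReal.ofReal (c₂ * (Vt * 2 ^ N * (3 * t) ^ 2 * 2)) := by
          rw [ENNReal.ofReal_mul hc₂0,
            show ENNReal.ofReal (Vt * 2 ^ N * (3 * t) ^ 2 * 2)
              = ENNReal.ofReal (Vt * 2 ^ N * (3 * t) ^ 2) * 2 from by
              rw [ENNReal.ofReal_mul (show (0:ℝ) ≤ Vt * 2 ^ N * (3 * t) ^ 2 by positivity)]
              norm_num]
  -- final combination
  calc ∫⁻ y in S, ENNReal.ofReal (G x₀ y * P y)
      ≤ ∫⁻ y in S, ENNReal.ofReal (C₀ * ‖x₀ - y‖ ^ (2 - N) * P y) := hmono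
    _ ≤ (∫⁻ y in S₁, ENNReal.ofReal (C₀ * ‖x₀ - y‖ ^ (2 - N) * P y))
        + ∫⁻ y in S₂, ENNReal.ofReal (C₀ * ‖x₀ - y‖ ^ (2 - N) * P y) :=
        le_trans (lintegral_mono_set hSsub) (lintegral_union_le _ _ _)
    _ ≤ ENNReal.ofReal (c₁ * (Vt * 2 ^ N * 3 * δ ^ (-(2:ℝ))))
        + ENNReal.ofReal (c₂ * (Vt * 2 ^ N * (3 * t) ^ 2 * 2)) := add_le_add hb1 hb2
    _ = ENNReal.ofReal (c₁ * (Vt * 2 ^ N * 3 * δ ^ (-(2:ℝ)))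
        + c₂ * (Vt * 2 ^ N * (3 * t) ^ 2 * 2)) :=
        (ENNReal.ofReal_add (by positivity) (by positivity)).symm
    _ ≤ ENNReal.ofReal (C₀ * Vt * 2 ^ (3 * N + 10)
        * (δ ^ ((N - 2) / 2) * (δ ^ 2 + t ^ 2) ^ (1 - N / 2))) := by
        apply ENNReal.ofReal_le_ofReal
        -- real arithmetic endgame
        set core : ℝ := δ ^ ((N - 2) / 2) * (δ ^ 2 + t ^ 2) ^ (1 - N / 2) with hcore
        have hcore0 : 0 ≤ core := by positivity
        have e_t2 : (t / 2 : ℝ) ^ (2 - N) = 2 ^ (N - 2) * t ^ (2 - N) := by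
          rw [div_eq_mul_inv, Real.mul_rpow ht0.le (by positivity),
            Real.inv_rpow (by norm_num : (0:ℝ) ≤ 2), ← Real.rpow_neg (by norm_num : (0:ℝ) ≤ 2),
            show -(2 - N) = N - 2 from by ring]
          ring
        have e_t3 : (t / 2 : ℝ) ^ (-(N + 2)) = 2 ^ (N + 2) * t ^ (-(N + 2)) := by
          rw [div_eq_mul_inv, Real.mul_rpow ht0.le (by positivity),
            Real.inv_rpow (by norm_num : (0:ℝ) ≤ 2), ← Real.rpow_neg (by norm_num : (0:ℝ) ≤ 2),
            show -(-(N + 2)) = N + 2 from by ring]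
          ring
        have e_d1 : δ ^ ((N + 2) / 2) * δ ^ (-(2:ℝ)) = δ ^ ((N - 2) / 2) := by
          rw [← Real.rpow_add h0]; congr 1; ring
        have e_d2 : δ ^ ((N + 2) / 2) = δ ^ ((N - 2) / 2) * δ ^ (2:ℝ) := by
          rw [← Real.rpow_add h0]; congr 1; ring
        have htcore : t ^ (2 - N) ≤ 2 ^ (N / 2 - 1) * (δ ^ 2 + t ^ 2) ^ (1 - N / 2) := by
          have hdt_sq : δ ^ 2 ≤ t ^ 2 := by nlinarith
          have h11 : (2 * t ^ 2 : ℝ) ^ (1 - N / 2) ≤ (δ ^ 2 + t ^ 2) ^ (1 - N / 2) :=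
            Real.rpow_le_rpow_of_nonpos (by positivity) (by nlinarith) (by linarith)
          have h12 : (2 * t ^ 2 : ℝ) ^ (1 - N / 2) = 2 ^ (1 - N / 2) * t ^ (2 - N) := by
            rw [Real.mul_rpow (by norm_num) (by positivity), sq_rpow ht0,
              show 2 * (1 - N / 2) = 2 - N from by ring]
          have h13 : 2 ^ (1 - N / 2) * t ^ (2 - N) ≤ (δ ^ 2 + t ^ 2) ^ (1 - N / 2) := by
            rw [← h12]; exact h11
          have h14 : (2:ℝ) ^ (N / 2 - 1) * (2 ^ (1 - N / 2) * t ^ (2 - N))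
              ≤ 2 ^ (N / 2 - 1) * (δ ^ 2 + t ^ 2) ^ (1 - N / 2) :=
            mul_le_mul_of_nonneg_left h13 (by positivity)
          calc t ^ (2 - N) = 2 ^ (N / 2 - 1) * 2 ^ (1 - N / 2) * t ^ (2 - N) := by
                rw [← Real.rpow_add two_pos, show N / 2 - 1 + (1 - N / 2) = 0 from by ring,
                  Real.rpow_zero]
                ring
            _ ≤ 2 ^ (N / 2 - 1) * (δ ^ 2 + t ^ 2) ^ (1 - N / 2) := by
                rw [mul_assoc]; exact h14
        have hA2core : δ ^ ((N + 2) / 2) * t ^ (-(N + 2)) * t ^ 2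
            ≤ δ ^ ((N - 2) / 2) * t ^ (2 - N) := by
          have h10 : δ ^ (2:ℝ) ≤ t ^ (2:ℝ) := by
            rw [Real.rpow_two, Real.rpow_two]; nlinarith
          calc δ ^ ((N + 2) / 2) * t ^ (-(N + 2)) * t ^ 2
              = δ ^ ((N - 2) / 2) * δ ^ (2:ℝ) * (t ^ (-(N + 2)) * t ^ 2) := by
                rw [e_d2]; ring
            _ ≤ δ ^ ((N - 2) / 2) * t ^ (2:ℝ) * (t ^ (-(N + 2)) * t ^ 2) := by
                apply mul_le_mul_of_nonneg_right
                  (mul_le_mul_of_nonneg_left h10 (by positivity)) (by positivity)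
            _ = δ ^ ((N - 2) / 2) * (t ^ (2:ℝ) * (t ^ (-(N + 2)) * t ^ 2)) := by ring
            _ = δ ^ ((N - 2) / 2) * t ^ (2 - N) := by
                rw [show t ^ (2:ℝ) * (t ^ (-(N + 2)) * t ^ 2) = t ^ (2 - N) from by
                  rw [show (t:ℝ) ^ 2 = t ^ (2:ℝ) from (Real.rpow_two t).symm,
                    ← Real.rpow_add ht0, ← Real.rpow_add ht0,
                    show (2:ℝ) + (-(N + 2) + 2) = 2 - N from by ring]]
        have hBcore : δ ^ ((N - 2) / 2) * t ^ (2 - N)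
            ≤ 2 ^ (N / 2 - 1) * core := by
          rw [hcore]
          calc δ ^ ((N - 2) / 2) * t ^ (2 - N)
              ≤ δ ^ ((N - 2) / 2) * (2 ^ (N / 2 - 1) * (δ ^ 2 + t ^ 2) ^ (1 - N / 2)) :=
                mul_le_mul_of_nonneg_left htcore (by positivity)
            _ = 2 ^ (N / 2 - 1) * (δ ^ ((N - 2) / 2) * (δ ^ 2 + t ^ 2) ^ (1 - N / 2)) := by ring
        have hterm1 : c₁ * (Vt * 2 ^ N * 3 * δ ^ (-(2:ℝ)))
            ≤ C₀ * Vt * 2 ^ (3 * N + 9) * core := by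
          have e1 : c₁ * (Vt * 2 ^ N * 3 * δ ^ (-(2:ℝ)))
              = 3 * C₀ * Vt * (2 ^ N * 2 ^ (N - 2)) * (δ ^ ((N - 2) / 2) * t ^ (2 - N)) := by
            rw [hc₁, e_t2, ← e_d1]; ring
          have e2 : (2:ℝ) ^ N * 2 ^ (N - 2) = 2 ^ (2 * N - 2) := by
            rw [← Real.rpow_add two_pos]; congr 1; ring
          have e3 : 3 * C₀ * Vt * (2:ℝ) ^ (2 * N - 2) * (2 ^ (N / 2 - 1) * core)
              ≤ C₀ * Vt * 2 ^ (3 * N + 9) * core := by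
            have h4 : (3:ℝ) * (2 ^ (2 * N - 2) * 2 ^ (N / 2 - 1)) ≤ 2 ^ (3 * N + 9) := by
              have h5 : (3:ℝ) ≤ 2 ^ (2:ℝ) := by
                rw [Real.rpow_two]; norm_num
              calc (3:ℝ) * (2 ^ (2 * N - 2) * 2 ^ (N / 2 - 1))
                  = 3 * 2 ^ (2 * N - 2 + (N / 2 - 1)) := by rw [← Real.rpow_add two_pos]
                _ ≤ 2 ^ (2:ℝ) * 2 ^ (2 * N - 2 + (N / 2 - 1)) :=
                    mul_le_mul_of_nonneg_right h5 (by positivity)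
                _ = 2 ^ (2 + (2 * N - 2 + (N / 2 - 1))) := by rw [← Real.rpow_add two_pos]
                _ ≤ 2 ^ (3 * N + 9) := hpow _ _ (by linarith)
            calc 3 * C₀ * Vt * (2:ℝ) ^ (2 * N - 2) * (2 ^ (N / 2 - 1) * core)
                = (3 * (2 ^ (2 * N - 2) * 2 ^ (N / 2 - 1))) * (C₀ * Vt * core) := by ring
              _ ≤ 2 ^ (3 * N + 9) * (C₀ * Vt * core) :=
                  mul_le_mul_of_nonneg_right h4 (by positivity)
              _ = C₀ * Vt * 2 ^ (3 * N + 9) * core := by ring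
          calc c₁ * (Vt * 2 ^ N * 3 * δ ^ (-(2:ℝ)))
              = 3 * C₀ * Vt * 2 ^ (2 * N - 2) * (δ ^ ((N - 2) / 2) * t ^ (2 - N)) := by
                rw [e1, e2]
            _ ≤ 3 * C₀ * Vt * 2 ^ (2 * N - 2) * (2 ^ (N / 2 - 1) * core) :=
                mul_le_mul_of_nonneg_left hBcore (by positivity)
            _ ≤ C₀ * Vt * 2 ^ (3 * N + 9) * core := e3
        have hterm2 : c₂ * (Vt * 2 ^ N * (3 * t) ^ 2 * 2)
            ≤ C₀ * Vt * 2 ^ (3 * N + 9) * core := by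
          have e1 : c₂ * (Vt * 2 ^ N * (3 * t) ^ 2 * 2)
              = 18 * C₀ * Vt * (2 ^ N * 2 ^ (N + 2))
                * (δ ^ ((N + 2) / 2) * t ^ (-(N + 2)) * t ^ 2) := by
            rw [hc₂, e_t3]; ring
          have e2 : (2:ℝ) ^ N * 2 ^ (N + 2) = 2 ^ (2 * N + 2) := by
            rw [← Real.rpow_add two_pos]; congr 1; ring
          have e3 : 18 * C₀ * Vt * (2:ℝ) ^ (2 * N + 2) * (2 ^ (N / 2 - 1) * core)
              ≤ C₀ * Vt * 2 ^ (3 * N + 9) * core := by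
            have h4 : (18:ℝ) * (2 ^ (2 * N + 2) * 2 ^ (N / 2 - 1)) ≤ 2 ^ (3 * N + 9) := by
              have h5 : (18:ℝ) ≤ 2 ^ (5:ℝ) := by
                rw [show (5:ℝ) = ((5:ℕ):ℝ) from by norm_num, Real.rpow_natCast]; norm_num
              calc (18:ℝ) * (2 ^ (2 * N + 2) * 2 ^ (N / 2 - 1))
                  = 18 * 2 ^ (2 * N + 2 + (N / 2 - 1)) := by rw [← Real.rpow_add two_pos]
                _ ≤ 2 ^ (5:ℝ) * 2 ^ (2 * N + 2 + (N / 2 - 1)) :=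
                    mul_le_mul_of_nonneg_right h5 (by positivity)
                _ = 2 ^ (5 + (2 * N + 2 + (N / 2 - 1))) := by rw [← Real.rpow_add two_pos]
                _ ≤ 2 ^ (3 * N + 9) := hpow _ _ (by linarith)
            calc 18 * C₀ * Vt * (2:ℝ) ^ (2 * N + 2) * (2 ^ (N / 2 - 1) * core)
                = (18 * (2 ^ (2 * N + 2) * 2 ^ (N / 2 - 1))) * (C₀ * Vt * core) := by ring
              _ ≤ 2 ^ (3 * N + 9) * (C₀ * Vt * core) :=
                  mul_le_mul_of_nonneg_right h4 (by positivity)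
              _ = C₀ * Vt * 2 ^ (3 * N + 9) * core := by ring
          calc c₂ * (Vt * 2 ^ N * (3 * t) ^ 2 * 2)
              = 18 * C₀ * Vt * 2 ^ (2 * N + 2)
                * (δ ^ ((N + 2) / 2) * t ^ (-(N + 2)) * t ^ 2) := by rw [e1, e2]
            _ ≤ 18 * C₀ * Vt * 2 ^ (2 * N + 2) * (δ ^ ((N - 2) / 2) * t ^ (2 - N)) :=
                mul_le_mul_of_nonneg_left hA2core (by positivity)
            _ ≤ 18 * C₀ * Vt * 2 ^ (2 * N + 2) * (2 ^ (N / 2 - 1) * core) :=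
                mul_le_mul_of_nonneg_left hBcore (by positivity)
            _ ≤ C₀ * Vt * 2 ^ (3 * N + 9) * core := e3
        have hfin : (2:ℝ) ^ (3 * N + 9) + 2 ^ (3 * N + 9) = 2 ^ (3 * N + 10) := by
          rw [show (3 * N + 10 : ℝ) = 3 * N + 9 + 1 from by ring,
            Real.rpow_add two_pos (3 * N + 9) 1, Real.rpow_one]
          ring
        have := add_le_add hterm1 hterm2
        calc c₁ * (Vt * 2 ^ N * 3 * δ ^ (-(2:ℝ))) + c₂ * (Vt * 2 ^ N * (3 * t) ^ 2 * 2)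
            ≤ C₀ * Vt * 2 ^ (3 * N + 9) * core + C₀ * Vt * 2 ^ (3 * N + 9) * core := this
          _ = C₀ * Vt * (2 ^ (3 * N + 9) + 2 ^ (3 * N + 9)) * core := by ring
          _ = C₀ * Vt * 2 ^ (3 * N + 10) * core := by rw [hfin]

set_option maxHeartbeats 2000000 in
lemma aux2 (n : ℕ) (hn : 3 ≤ n) (hn5 : 5 ≤ n) (C₀ : ℝ) (hC₀ : 0 < C₀)
    (G : EuclideanSpace ℝ (Fin n) → EuclideanSpace ℝ (Fin n) → ℝ)
    (hG : ∀ x y, 0 ≤ G x y ∧ G x y ≤ C₀ * ‖x - y‖ ^ (2 - (n : ℝ))) (δ : ℝ)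
    (h0 : 0 < δ) (h1 : δ ≤ 1)
    (x₀ : EuclideanSpace ℝ (Fin n)) (hx₀ : Real.sqrt δ ≤ ‖x₀‖) :
    (∫ y in {y : EuclideanSpace ℝ (Fin n) | ‖y‖ ≤ Real.sqrt δ},
        G x₀ y * (δ ^ (((n : ℝ) - 2) / 2) * (δ ^ 2 + ‖y‖ ^ 2) ^ (1 - (n : ℝ) / 2))) ≤
      (C₀ * (volume (ball (0 : EuclideanSpace ℝ (Fin n)) 1)).toReal * 2 ^ (3 * (n:ℝ) + 10))
        * δ ^ (((n : ℝ) - 2) / 2) * (δ + ‖x₀‖) ^ (4 - (n : ℝ)) := by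
  have hne : Nonempty (Fin n) := ⟨⟨0, by omega⟩⟩
  set N : ℝ := (n : ℝ) with hNdef
  have hN3 : (3:ℝ) ≤ N := by rw [hNdef]; exact_mod_cast hn
  have hN5 : (5:ℝ) ≤ N := by rw [hNdef]; exact_mod_cast hn5
  set Vt : ℝ := (volume (ball (0 : EuclideanSpace ℝ (Fin n)) 1)).toReal with hVt
  have hVpos : 0 < Vt := ENNReal.toReal_pos (Metric.measure_ball_pos volume 0 one_pos).ne'
    measure_ball_lt_top.ne
  have hpow : ∀ e f : ℝ, e ≤ f → (2:ℝ) ^ e ≤ 2 ^ f :=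
    fun e f h => Real.rpow_le_rpow_of_exponent_le one_le_two h
  set t : ℝ := ‖x₀‖ with ht
  have hs0 : 0 < Real.sqrt δ := Real.sqrt_pos.2 h0
  have ht0 : 0 < t := lt_of_lt_of_le hs0 hx₀
  have hδR : δ ≤ Real.sqrt δ := by
    have h4 := Real.sqrt_le_sqrt (show δ ^ 2 ≤ δ by nlinarith)
    rwa [Real.sqrt_sq h0.le] at h4
  have hδt : δ ≤ t := hδR.trans hx₀
  have hδt2 : δ ≤ t ^ 2 := by
    have h4 : Real.sqrt δ ^ 2 ≤ t ^ 2 := by nlinarith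
    rwa [Real.sq_sqrt h0.le] at h4
  set S : Set (EuclideanSpace ℝ (Fin n)) := {y | ‖y‖ ≤ Real.sqrt δ} with hS
  set P : EuclideanSpace ℝ (Fin n) → ℝ :=
    fun y => δ ^ ((N - 2) / 2) * (δ ^ 2 + ‖y‖ ^ 2) ^ (1 - N / 2) with hPdef
  have hP0 : ∀ y, 0 ≤ P y := fun y => by positivity
  have hRHS0 : 0 ≤ (C₀ * Vt * 2 ^ (3 * N + 10)) * δ ^ ((N - 2) / 2) * (δ + t) ^ (4 - N) := by
    positivity
  by_cases hInt : IntegrableOn (fun y => G x₀ y * P y) S volume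
  swap
  · rw [MeasureTheory.integral_undef hInt]
    exact hRHS0
  rw [MeasureTheory.integral_eq_lintegral_of_nonneg_ae
    (Filter.Eventually.of_forall fun y => mul_nonneg (hG x₀ y).1 (hP0 y))
    hInt.aestronglyMeasurable]
  apply ENNReal.toReal_le_of_le_ofReal hRHS0
  set S₁ : Set (EuclideanSpace ℝ (Fin n)) := S ∩ {y | ‖y‖ ≤ t / 2} with hS₁
  set S₂ : Set (EuclideanSpace ℝ (Fin n)) := S ∩ {y | t / 2 < ‖y‖} with hS₂
  have hSsub : S ⊆ S₁ ∪ S₂ := by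
    intro y hy
    by_cases h : ‖y‖ ≤ t / 2
    · exact Or.inl ⟨hy, h⟩
    · exact Or.inr ⟨hy, not_le.1 h⟩
  set c₁ : ℝ := C₀ * (t / 2) ^ (2 - N) * δ ^ ((N - 2) / 2) with hc₁
  set c₂ : ℝ := C₀ * δ ^ ((N - 2) / 2) * (t / 2) ^ (2 - N) with hc₂
  have hc₁0 : 0 ≤ c₁ := by positivity
  have hc₂0 : 0 ≤ c₂ := by positivity
  have hmono : ∫⁻ y in S, ENNReal.ofReal (G x₀ y * P y) ≤
      ∫⁻ y in S, ENNReal.ofReal (C₀ * ‖x₀ - y‖ ^ (2 - N) * P y) :=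
    lintegral_mono fun y => ENNReal.ofReal_le_ofReal
      (mul_le_mul_of_nonneg_right (hG x₀ y).2 (hP0 y))
  have hb1 : ∫⁻ y in S₁, ENNReal.ofReal (C₀ * ‖x₀ - y‖ ^ (2 - N) * P y) ≤
      ENNReal.ofReal (c₁ * (Vt * 2 ^ N * 9 * δ)) := by
    have hpt : ∀ y ∈ S₁, ENNReal.ofReal (C₀ * ‖x₀ - y‖ ^ (2 - N) * P y) ≤
        ENNReal.ofReal c₁ * ENNReal.ofReal ((δ ^ 2 + ‖y‖ ^ 2) ^ (1 - N / 2)) := by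
      intro y hy
      rw [← ENNReal.ofReal_mul hc₁0]
      apply ENNReal.ofReal_le_ofReal
      have hd : t / 2 ≤ ‖x₀ - y‖ := by
        have h5 : ‖x₀‖ - ‖y‖ ≤ ‖x₀ - y‖ := norm_sub_norm_le x₀ y
        have h6 : ‖y‖ ≤ t / 2 := hy.2
        linarith
      have hrr : ‖x₀ - y‖ ^ (2 - N) ≤ (t / 2) ^ (2 - N) :=
        Real.rpow_le_rpow_of_nonpos (by positivity) hd (by linarith)
      calc C₀ * ‖x₀ - y‖ ^ (2 - N) * P y ≤ C₀ * (t / 2) ^ (2 - N) * P y :=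
            mul_le_mul_of_nonneg_right
              (mul_le_mul_of_nonneg_left hrr hC₀.le) (hP0 y)
        _ = c₁ * (δ ^ 2 + ‖y‖ ^ 2) ^ (1 - N / 2) := by rw [hPdef, hc₁]; ring
    calc ∫⁻ y in S₁, ENNReal.ofReal (C₀ * ‖x₀ - y‖ ^ (2 - N) * P y)
        ≤ ∫⁻ y in S₁, ENNReal.ofReal c₁
          * ENNReal.ofReal ((δ ^ 2 + ‖y‖ ^ 2) ^ (1 - N / 2)) :=
          setLIntegral_mono (by fun_prop) hpt
      _ = ENNReal.ofReal c₁
          * ∫⁻ y in S₁, ENNReal.ofReal ((δ ^ 2 + ‖y‖ ^ 2) ^ (1 - N / 2)) :=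
          lintegral_const_mul' _ _ ENNReal.ofReal_ne_top
      _ ≤ ENNReal.ofReal c₁
          * ∫⁻ y in S, ENNReal.ofReal ((δ ^ 2 + ‖y‖ ^ 2) ^ (1 - N / 2)) :=
          mul_le_mul_right (lintegral_mono_set Set.inter_subset_left) _
      _ ≤ ENNReal.ofReal c₁ * ENNReal.ofReal (Vt * 2 ^ N * 9 * δ) :=
          mul_le_mul_right (F3 hn h0 h1) _
      _ = ENNReal.ofReal (c₁ * (Vt * 2 ^ N * 9 * δ)) :=
          (ENNReal.ofReal_mul hc₁0).symm
  have hb2 : ∫⁻ y in S₂, ENNReal.ofReal (C₀ * ‖x₀ - y‖ ^ (2 - N) * P y) ≤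
      ENNReal.ofReal (c₂ * (Vt * 2 ^ N * (3 * t) ^ 2 * 2)) := by
    have hpt : ∀ y ∈ S₂, ENNReal.ofReal (C₀ * ‖x₀ - y‖ ^ (2 - N) * P y) ≤
        ENNReal.ofReal c₂ * ENNReal.ofReal (‖x₀ - y‖ ^ (2 - N)) := by
      intro y hy
      rw [← ENNReal.ofReal_mul hc₂0]
      apply ENNReal.ofReal_le_ofReal
      have hyt : t / 2 < ‖y‖ := hy.2
      have hw : (δ ^ 2 + ‖y‖ ^ 2) ^ (1 - N / 2) ≤ (t / 2) ^ (2 - N) := by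
        calc (δ ^ 2 + ‖y‖ ^ 2) ^ (1 - N / 2) ≤ ((t / 2) ^ 2) ^ (1 - N / 2) := by
              apply Real.rpow_le_rpow_of_nonpos (by positivity) (by nlinarith [sq_nonneg δ])
              linarith
          _ = (t / 2) ^ (2 - N) := by
              rw [sq_rpow (by positivity : (0:ℝ) < t / 2),
                show 2 * (1 - N / 2) = 2 - N from by ring]
      calc C₀ * ‖x₀ - y‖ ^ (2 - N) * P y
          = (C₀ * δ ^ ((N - 2) / 2) * ‖x₀ - y‖ ^ (2 - N))
            * (δ ^ 2 + ‖y‖ ^ 2) ^ (1 - N / 2) := by rw [hPdef]; ring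
        _ ≤ (C₀ * δ ^ ((N - 2) / 2) * ‖x₀ - y‖ ^ (2 - N)) * (t / 2) ^ (2 - N) :=
            mul_le_mul_of_nonneg_left hw (by positivity)
        _ = c₂ * ‖x₀ - y‖ ^ (2 - N) := by rw [hc₂]; ring
    have hS₂sub : S₂ ⊆ ball x₀ (3 * t) := by
      intro y hy
      rw [mem_ball, dist_eq_norm]
      have h7 : ‖x₀ - y‖ ≤ ‖x₀‖ + ‖y‖ := norm_sub_le x₀ y
      have h8 : ‖y‖ ≤ Real.sqrt δ := hy.1
      have h9 : ‖x₀ - y‖ ≤ 2 * t := by linarith [hx₀]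
      rw [norm_sub_rev] at h9
      linarith
    calc ∫⁻ y in S₂, ENNReal.ofReal (C₀ * ‖x₀ - y‖ ^ (2 - N) * P y)
        ≤ ∫⁻ y in S₂, ENNReal.ofReal c₂ * ENNReal.ofReal (‖x₀ - y‖ ^ (2 - N)) :=
          setLIntegral_mono (by fun_prop) hpt
      _ = ENNReal.ofReal c₂ * ∫⁻ y in S₂, ENNReal.ofReal (‖x₀ - y‖ ^ (2 - N)) :=
          lintegral_const_mul' _ _ ENNReal.ofReal_ne_top
      _ ≤ ENNReal.ofReal c₂ * ∫⁻ y in ball x₀ (3 * t), ENNReal.ofReal (‖x₀ - y‖ ^ (2 - N)) :=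
          mul_le_mul_right (lintegral_mono_set hS₂sub) _
      _ ≤ ENNReal.ofReal c₂ * (ENNReal.ofReal (Vt * 2 ^ N * (3 * t) ^ 2) * 2) :=
          mul_le_mul_right (lin hn x₀ (by positivity)) _
      _ = ENNReal.ofReal (c₂ * (Vt * 2 ^ N * (3 * t) ^ 2 * 2)) := by
          rw [ENNReal.ofReal_mul hc₂0,
            show ENNReal.ofReal (Vt * 2 ^ N * (3 * t) ^ 2 * 2)
              = ENNReal.ofReal (Vt * 2 ^ N * (3 * t) ^ 2) * 2 from by
              rw [ENNReal.ofReal_mul (show (0:ℝ) ≤ Vt * 2 ^ N * (3 * t) ^ 2 by positivity)]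
              norm_num]
  calc ∫⁻ y in S, ENNReal.ofReal (G x₀ y * P y)
      ≤ ∫⁻ y in S, ENNReal.ofReal (C₀ * ‖x₀ - y‖ ^ (2 - N) * P y) := hmono
    _ ≤ (∫⁻ y in S₁, ENNReal.ofReal (C₀ * ‖x₀ - y‖ ^ (2 - N) * P y))
        + ∫⁻ y in S₂, ENNReal.ofReal (C₀ * ‖x₀ - y‖ ^ (2 - N) * P y) :=
        le_trans (lintegral_mono_set hSsub) (lintegral_union_le _ _ _)
    _ ≤ ENNReal.ofReal (c₁ * (Vt * 2 ^ N * 9 * δ))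
        + ENNReal.ofReal (c₂ * (Vt * 2 ^ N * (3 * t) ^ 2 * 2)) := add_le_add hb1 hb2
    _ = ENNReal.ofReal (c₁ * (Vt * 2 ^ N * 9 * δ)
        + c₂ * (Vt * 2 ^ N * (3 * t) ^ 2 * 2)) :=
        (ENNReal.ofReal_add (by positivity) (by positivity)).symm
    _ ≤ ENNReal.ofReal ((C₀ * Vt * 2 ^ (3 * N + 10)) * δ ^ ((N - 2) / 2)
        * (δ + t) ^ (4 - N)) := by
        apply ENNReal.ofReal_le_ofReal
        set core : ℝ := δ ^ ((N - 2) / 2) * (δ + t) ^ (4 - N) with hcore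
        have hcore0 : 0 ≤ core := by positivity
        have e_t2 : (t / 2 : ℝ) ^ (2 - N) = 2 ^ (N - 2) * t ^ (2 - N) := by
          rw [div_eq_mul_inv, Real.mul_rpow ht0.le (by positivity),
            Real.inv_rpow (by norm_num : (0:ℝ) ≤ 2), ← Real.rpow_neg (by norm_num : (0:ℝ) ≤ 2),
            show -(2 - N) = N - 2 from by ring]
          ring
        have htcore : t ^ (4 - N) ≤ 2 ^ (N - 4) * (δ + t) ^ (4 - N) := by
          have h11 : (2 * t : ℝ) ^ (4 - N) ≤ (δ + t) ^ (4 - N) :=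
            Real.rpow_le_rpow_of_nonpos (by positivity) (by linarith) (by linarith)
          have h12 : (2 * t : ℝ) ^ (4 - N) = 2 ^ (4 - N) * t ^ (4 - N) :=
            Real.mul_rpow (by norm_num) ht0.le
          have h13 : 2 ^ (4 - N) * t ^ (4 - N) ≤ (δ + t) ^ (4 - N) := by
            rw [← h12]; exact h11
          have h14 : (2:ℝ) ^ (N - 4) * (2 ^ (4 - N) * t ^ (4 - N))
              ≤ 2 ^ (N - 4) * (δ + t) ^ (4 - N) :=
            mul_le_mul_of_nonneg_left h13 (by positivity)
          calc t ^ (4 - N) = 2 ^ (N - 4) * 2 ^ (4 - N) * t ^ (4 - N) := by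
                rw [← Real.rpow_add two_pos, show N - 4 + (4 - N) = 0 from by ring,
                  Real.rpow_zero]
                ring
            _ ≤ 2 ^ (N - 4) * (δ + t) ^ (4 - N) := by
                rw [mul_assoc]; exact h14
        have hBcore : δ ^ ((N - 2) / 2) * t ^ (4 - N) ≤ 2 ^ (N - 4) * core := by
          rw [hcore]
          calc δ ^ ((N - 2) / 2) * t ^ (4 - N)
              ≤ δ ^ ((N - 2) / 2) * (2 ^ (N - 4) * (δ + t) ^ (4 - N)) :=
                mul_le_mul_of_nonneg_left htcore (by positivity)
            _ = 2 ^ (N - 4) * (δ ^ ((N - 2) / 2) * (δ + t) ^ (4 - N)) := by ring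
        have htt : t ^ (2 - N) * t ^ 2 = t ^ (4 - N) := by
          rw [show (t:ℝ) ^ 2 = t ^ (2:ℝ) from (Real.rpow_two t).symm, ← Real.rpow_add ht0,
            show 2 - N + 2 = 4 - N from by ring]
        have hA1core : δ ^ ((N - 2) / 2) * t ^ (2 - N) * δ
            ≤ δ ^ ((N - 2) / 2) * t ^ (4 - N) := by
          calc δ ^ ((N - 2) / 2) * t ^ (2 - N) * δ
              = δ ^ ((N - 2) / 2) * t ^ (2 - N) * δ := rfl
            _ ≤ δ ^ ((N - 2) / 2) * t ^ (2 - N) * t ^ 2 :=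
                mul_le_mul_of_nonneg_left hδt2 (by positivity)
            _ = δ ^ ((N - 2) / 2) * (t ^ (2 - N) * t ^ 2) := by ring
            _ = δ ^ ((N - 2) / 2) * t ^ (4 - N) := by rw [htt]
        have hterm1 : c₁ * (Vt * 2 ^ N * 9 * δ)
            ≤ C₀ * Vt * 2 ^ (3 * N + 9) * core := by
          have e1 : c₁ * (Vt * 2 ^ N * 9 * δ)
              = 9 * C₀ * Vt * (2 ^ N * 2 ^ (N - 2))
                * (δ ^ ((N - 2) / 2) * t ^ (2 - N) * δ) := by
            rw [hc₁, e_t2]; ring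
          have e2 : (2:ℝ) ^ N * 2 ^ (N - 2) = 2 ^ (2 * N - 2) := by
            rw [← Real.rpow_add two_pos]; congr 1; ring
          have e3 : 9 * C₀ * Vt * (2:ℝ) ^ (2 * N - 2) * (2 ^ (N - 4) * core)
              ≤ C₀ * Vt * 2 ^ (3 * N + 9) * core := by
            have h4 : (9:ℝ) * (2 ^ (2 * N - 2) * 2 ^ (N - 4)) ≤ 2 ^ (3 * N + 9) := by
              have h5 : (9:ℝ) ≤ 2 ^ (4:ℝ) := by
                rw [show (4:ℝ) = ((4:ℕ):ℝ) from by norm_num, Real.rpow_natCast]; norm_num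
              calc (9:ℝ) * (2 ^ (2 * N - 2) * 2 ^ (N - 4))
                  = 9 * 2 ^ (2 * N - 2 + (N - 4)) := by rw [← Real.rpow_add two_pos]
                _ ≤ 2 ^ (4:ℝ) * 2 ^ (2 * N - 2 + (N - 4)) :=
                    mul_le_mul_of_nonneg_right h5 (by positivity)
                _ = 2 ^ (4 + (2 * N - 2 + (N - 4))) := by rw [← Real.rpow_add two_pos]
                _ ≤ 2 ^ (3 * N + 9) := hpow _ _ (by linarith)
            calc 9 * C₀ * Vt * (2:ℝ) ^ (2 * N - 2) * (2 ^ (N - 4) * core)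
                = (9 * (2 ^ (2 * N - 2) * 2 ^ (N - 4))) * (C₀ * Vt * core) := by ring
              _ ≤ 2 ^ (3 * N + 9) * (C₀ * Vt * core) :=
                  mul_le_mul_of_nonneg_right h4 (by positivity)
              _ = C₀ * Vt * 2 ^ (3 * N + 9) * core := by ring
          calc c₁ * (Vt * 2 ^ N * 9 * δ)
              = 9 * C₀ * Vt * 2 ^ (2 * N - 2) * (δ ^ ((N - 2) / 2) * t ^ (2 - N) * δ) := by
                rw [e1, e2]
            _ ≤ 9 * C₀ * Vt * 2 ^ (2 * N - 2) * (δ ^ ((N - 2) / 2) * t ^ (4 - N)) :=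
                mul_le_mul_of_nonneg_left hA1core (by positivity)
            _ ≤ 9 * C₀ * Vt * 2 ^ (2 * N - 2) * (2 ^ (N - 4) * core) :=
                mul_le_mul_of_nonneg_left hBcore (by positivity)
            _ ≤ C₀ * Vt * 2 ^ (3 * N + 9) * core := e3
        have hterm2 : c₂ * (Vt * 2 ^ N * (3 * t) ^ 2 * 2)
            ≤ C₀ * Vt * 2 ^ (3 * N + 9) * core := by
          have e1 : c₂ * (Vt * 2 ^ N * (3 * t) ^ 2 * 2)
              = 18 * C₀ * Vt * (2 ^ N * 2 ^ (N - 2))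
                * (δ ^ ((N - 2) / 2) * (t ^ (2 - N) * t ^ 2)) := by
            rw [hc₂, e_t2]; ring
          have e2 : (2:ℝ) ^ N * 2 ^ (N - 2) = 2 ^ (2 * N - 2) := by
            rw [← Real.rpow_add two_pos]; congr 1; ring
          have e3 : 18 * C₀ * Vt * (2:ℝ) ^ (2 * N - 2) * (2 ^ (N - 4) * core)
              ≤ C₀ * Vt * 2 ^ (3 * N + 9) * core := by
            have h4 : (18:ℝ) * (2 ^ (2 * N - 2) * 2 ^ (N - 4)) ≤ 2 ^ (3 * N + 9) := by
              have h5 : (18:ℝ) ≤ 2 ^ (5:ℝ) := by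
                rw [show (5:ℝ) = ((5:ℕ):ℝ) from by norm_num, Real.rpow_natCast]; norm_num
              calc (18:ℝ) * (2 ^ (2 * N - 2) * 2 ^ (N - 4))
                  = 18 * 2 ^ (2 * N - 2 + (N - 4)) := by rw [← Real.rpow_add two_pos]
                _ ≤ 2 ^ (5:ℝ) * 2 ^ (2 * N - 2 + (N - 4)) :=
                    mul_le_mul_of_nonneg_right h5 (by positivity)
                _ = 2 ^ (5 + (2 * N - 2 + (N - 4))) := by rw [← Real.rpow_add two_pos]
                _ ≤ 2 ^ (3 * N + 9) := hpow _ _ (by linarith)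
            calc 18 * C₀ * Vt * (2:ℝ) ^ (2 * N - 2) * (2 ^ (N - 4) * core)
                = (18 * (2 ^ (2 * N - 2) * 2 ^ (N - 4))) * (C₀ * Vt * core) := by ring
              _ ≤ 2 ^ (3 * N + 9) * (C₀ * Vt * core) :=
                  mul_le_mul_of_nonneg_right h4 (by positivity)
              _ = C₀ * Vt * 2 ^ (3 * N + 9) * core := by ring
          calc c₂ * (Vt * 2 ^ N * (3 * t) ^ 2 * 2)
              = 18 * C₀ * Vt * 2 ^ (2 * N - 2)
                * (δ ^ ((N - 2) / 2) * (t ^ (2 - N) * t ^ 2)) := by rw [e1, e2]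
            _ = 18 * C₀ * Vt * 2 ^ (2 * N - 2) * (δ ^ ((N - 2) / 2) * t ^ (4 - N)) := by
                rw [htt]
            _ ≤ 18 * C₀ * Vt * 2 ^ (2 * N - 2) * (2 ^ (N - 4) * core) :=
                mul_le_mul_of_nonneg_left hBcore (by positivity)
            _ ≤ C₀ * Vt * 2 ^ (3 * N + 9) * core := e3
        have hfin : (2:ℝ) ^ (3 * N + 9) + 2 ^ (3 * N + 9) = 2 ^ (3 * N + 10) := by
          rw [show (3 * N + 10 : ℝ) = 3 * N + 9 + 1 from by ring,
            Real.rpow_add two_pos (3 * N + 9) 1, Real.rpow_one]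
          ring
        calc c₁ * (Vt * 2 ^ N * 9 * δ) + c₂ * (Vt * 2 ^ N * (3 * t) ^ 2 * 2)
            ≤ C₀ * Vt * 2 ^ (3 * N + 9) * core + C₀ * Vt * 2 ^ (3 * N + 9) * core :=
              add_le_add hterm1 hterm2
          _ = C₀ * Vt * (2 ^ (3 * N + 9) + 2 ^ (3 * N + 9)) * core := by ring
          _ = C₀ * Vt * 2 ^ (3 * N + 10) * core := by rw [hfin]
          _ = (C₀ * Vt * 2 ^ (3 * N + 10)) * δ ^ ((N - 2) / 2) * (δ + t) ^ (4 - N) := by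
              rw [hcore]; ring

end
end helpers

/-- Green's-function estimates: if `0 ≤ G(x,y) ≤ C₀|x-y|^{2-n}`, `0 < δ ≤ 1`,
`W(y) = δ^{(n-2)/2}(δ² + |y|²)^{1-n/2}`, `θ(x) = δ + |x|`, then there is
`C = C(n, C₀) > 0` such that for `|x₀| ≥ √δ`:
`∫_{|y| ≤ √δ} G(x₀,y) W(y)^{(n+2)/(n-2)} dy ≤ C·W(x₀)` and, for `n ≥ 5`,
`∫_{|y| ≤ √δ} G(x₀,y) W(y) dy ≤ C·δ^{(n-2)/2} θ(x₀)^{4-n}`. -/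
theorem stmt_19 (n : ℕ) (hn : 3 ≤ n) (C₀ : ℝ) (hC₀ : 0 < C₀)
    (G : EuclideanSpace ℝ (Fin n) → EuclideanSpace ℝ (Fin n) → ℝ)
    (hG : ∀ x y, 0 ≤ G x y ∧ G x y ≤ C₀ * ‖x - y‖ ^ (2 - (n : ℝ))) :
    ∃ C : ℝ, 0 < C ∧ ∀ (δ : ℝ), 0 < δ → δ ≤ 1 →
      ∀ x₀ : EuclideanSpace ℝ (Fin n), Real.sqrt δ ≤ ‖x₀‖ →
        ((∫ y in {y : EuclideanSpace ℝ (Fin n) | ‖y‖ ≤ Real.sqrt δ},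
            G x₀ y * (δ ^ (((n : ℝ) - 2) / 2) *
              (δ ^ 2 + ‖y‖ ^ 2) ^ (1 - (n : ℝ) / 2)) ^ (((n : ℝ) + 2) / ((n : ℝ) - 2))) ≤
          C * (δ ^ (((n : ℝ) - 2) / 2) * (δ ^ 2 + ‖x₀‖ ^ 2) ^ (1 - (n : ℝ) / 2))) ∧
        (5 ≤ n →
          (∫ y in {y : EuclideanSpace ℝ (Fin n) | ‖y‖ ≤ Real.sqrt δ},
              G x₀ y * (δ ^ (((n : ℝ) - 2) / 2) *
                (δ ^ 2 + ‖y‖ ^ 2) ^ (1 - (n : ℝ) / 2))) ≤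
            C * δ ^ (((n : ℝ) - 2) / 2) * (δ + ‖x₀‖) ^ (4 - (n : ℝ))) := by
  obtain ⟨C₁, hC₁, H₁⟩ := aux1 n hn C₀ hC₀ G hG
  set Vt : ℝ := (volume (Metric.ball (0 : EuclideanSpace ℝ (Fin n)) 1)).toReal with hVt
  have hne : Nonempty (Fin n) := ⟨⟨0, by omega⟩⟩
  have hVpos : 0 < Vt := ENNReal.toReal_pos (Metric.measure_ball_pos volume 0 one_pos).ne'
    measure_ball_lt_top.ne
  set C₂ : ℝ := C₀ * Vt * 2 ^ (3 * (n:ℝ) + 10) with hC₂def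
  have hC₂ : 0 < C₂ := by positivity
  refine ⟨max C₁ C₂, lt_max_of_lt_left hC₁, ?_⟩
  intro δ h0 h1 x₀ hx₀
  constructor
  · refine le_trans (H₁ δ h0 h1 x₀ hx₀) ?_
    apply mul_le_mul_of_nonneg_right (le_max_left _ _)
    positivity
  · intro hn5
    refine le_trans (aux2 n hn hn5 C₀ hC₀ G hG δ h0 h1 x₀ hx₀) ?_
    apply mul_le_mul_of_nonneg_right _ (by positivity)
    apply mul_le_mul_of_nonneg_right (le_max_right _ _)
    positivity
end
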